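/- arXiv:1812.09554 — 3 statements merged into one kernel-verified Lean document; each statement's English description precedes it below -/
import Mathlib

section
/- Let Ω' ⊂ ℝⁿ be a domain and let u, v be positive C² functions on Ω' whose graphs are locally convex, and suppose σ_k(κ[v])(x) < σ_k(κ[u])(x) for all x ∈ Ω'. If u − v attains a local maximum at a point x₀ ∈ Ω', then u(x₀) ≠ v(x₀). -/
open scoped BigOperators
open Metric Set

noncomputable section

/-- `ℝⁿ` with the Euclidean metric. -/
abbrev En (n : ℕ) := EuclideanSpace ℝ (Fin n)

/-- First partial derivative `∂u/∂xᵢ`. -/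
def pgrad {n : ℕ} (u : En n → ℝ) (x : En n) (i : Fin n) : ℝ :=
  fderiv ℝ u x (EuclideanSpace.single i 1)

/-- Second partial derivative `∂²u/∂xᵢ∂xⱼ`. -/
def phess {n : ℕ} (u : En n → ℝ) (x : En n) (i j : Fin n) : ℝ :=
  fderiv ℝ (fun y => fderiv ℝ u y (EuclideanSpace.single j 1)) x (EuclideanSpace.single i 1)

/-- The gradient of `u` at `x` as a vector in `ℝⁿ`. -/
def gradVec {n : ℕ} (u : En n → ℝ) (x : En n) : En n :=
  WithLp.toLp 2 (fun i => pgrad u x i)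

/-- `w = √(1 + |Du|²)`. -/
def wgt {n : ℕ} (u : En n → ℝ) (x : En n) : ℝ :=
  Real.sqrt (1 + ∑ i, pgrad u x i ^ 2)

/-- `γ^{ik} = δ_{ik} − uᵢ u_k / (w(1+w))`. -/
def gam {n : ℕ} (u : En n → ℝ) (x : En n) (i k : Fin n) : ℝ :=
  (if i = k then (1:ℝ) else 0) - pgrad u x i * pgrad u x k / (wgt u x * (1 + wgt u x))

/-- The matrix `A[u]`, whose eigenvalues are the hyperbolic principal curvatures of the
vertical graph of `u` in the half-space model of `H^{n+1}`. -/
def curvMat {n : ℕ} (u : En n → ℝ) (x : En n) : Matrix (Fin n) (Fin n) ℝ :=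
  Matrix.of fun i j => (1 / wgt u x) *
    ((if i = j then (1:ℝ) else 0) +
      u x * ∑ k, ∑ l, gam u x i k * phess u x k l * gam u x l j)

/-- The `k`-th elementary symmetric polynomial of the eigenvalues of the `n × n` matrix `M`,
read off from the characteristic polynomial: `charpoly M = ∏ (X - λᵢ)`, so
`e_k(λ) = (-1)^k · coeff (n-k)`. -/
def sigmaElem {n : ℕ} (k : ℕ) (M : Matrix (Fin n) (Fin n) ℝ) : ℝ :=
  (-1 : ℝ) ^ k * M.charpoly.coeff (n - k)

/-- A bounded domain in `ℝⁿ` whose boundary is a (finite disjoint union of) smooth closed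
embedded hypersurface(s), expressed via local smooth defining functions. -/
def SmoothBoundedDomain {n : ℕ} (Ω : Set (En n)) : Prop :=
  IsOpen Ω ∧ Bornology.IsBounded Ω ∧ Ω.Nonempty ∧
  ∀ x ∈ frontier Ω, ∃ (U : Set (En n)) (ρ : En n → ℝ),
    IsOpen U ∧ x ∈ U ∧ ContDiff ℝ (⊤ : ℕ∞) ρ ∧ (∀ y ∈ U, fderiv ℝ ρ y ≠ 0) ∧
    Ω ∩ U = {y ∈ U | ρ y < 0} ∧ frontier Ω ∩ U = {y ∈ U | ρ y = 0}

/-- The subsolution setting of the paper. -/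
structure SubsolutionSetting {n : ℕ} (k : ℕ) (Ω : Set (En n)) (ψ : En n → ℝ → ℝ)
    (ubar : En n → ℝ) : Prop where
  domain : SmoothBoundedDomain Ω
  ψpos : ∀ x z, 0 ≤ z → 0 < ψ x z
  ψsmooth : ContDiffOn ℝ (⊤ : ℕ∞) (fun p : En n × ℝ => ψ p.1 p.2) {p : En n × ℝ | 0 < p.2}
  ψcont : ContinuousOn (fun p : En n × ℝ => ψ p.1 p.2) {p : En n × ℝ | 0 ≤ p.2}
  ubar4 : ContDiffOn ℝ 4 ubar Ω
  ubar2 : ContDiffOn ℝ 2 ubar (closure Ω)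
  ubarpos : ∀ x ∈ Ω, 0 < ubar x
  ubarconv : ∀ x ∈ Ω, (curvMat ubar x).PosDef
  ubarsub : ∀ x ∈ Ω, ψ x (ubar x) ≤ sigmaElem k (curvMat ubar x)
  ubarbdry : ∀ x ∈ frontier Ω, ubar x = 0

/-- Membership of the point `(x, t) ∈ ℝⁿ × ℝ = ℝ^{n+1}` in the open Euclidean ball of radius `R`
centered at `(c', h)`. -/
def inBallH {n : ℕ} (c' : En n) (h R : ℝ) (x : En n) (t : ℝ) : Prop :=
  dist x c' ^ 2 + (t - h) ^ 2 < R ^ 2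

/-- Membership of `(x, t)` in the sphere of radius `R` centered at `(c', h)`. -/
def onSphereH {n : ℕ} (c' : En n) (h R : ℝ) (x : En n) (t : ℝ) : Prop :=
  dist x c' ^ 2 + (t - h) ^ 2 = R ^ 2

/-- The "almost round" assumption. -/
def AlmostRound {n : ℕ} (k : ℕ) (Ω : Set (En n)) (ψ : En n → ℝ → ℝ) : Prop :=
  ∃ (σs σb Rs Rb : ℝ) (as' ab' : En n),
    0 < σs ∧ σs < σb ∧ σb < 1 ∧ 0 < Rs ∧ Rs < Rb ∧
    (∀ x ∈ Ω, ∀ z : ℝ, 0 < z → (n.choose k : ℝ) * σb ^ k < ψ x z) ∧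
    (∀ x : En n, inBallH as' (-(σs * Rs)) Rs x 0 → x ∈ Ω) ∧
    (∀ x ∈ Ω, inBallH ab' (-(σb * Rb)) Rb x 0) ∧
    (∀ (x : En n) (t : ℝ), inBallH as' (-(σs * Rs)) Rs x t → inBallH ab' (-(σb * Rb)) Rb x t) ∧
    (∃! p : En n × ℝ, onSphereH as' (-(σs * Rs)) Rs p.1 p.2 ∧
      onSphereH ab' (-(σb * Rb)) Rb p.1 p.2)

/-- Condition (1.8): the Euclidean Hessian of `ū / σ_k^{1/k}(κ[ū])` is positive semidefinite. -/
def Cond18 {n : ℕ} (k : ℕ) (Ω : Set (En n)) (ubar : En n → ℝ) : Prop :=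
  ∀ x ∈ Ω, (Matrix.of fun α β : Fin n =>
    phess (fun y => ubar y / (sigmaElem k (curvMat ubar y)) ^ ((k:ℝ)⁻¹)) x α β).PosSemidef

/-- Coordinate directions in `ℝⁿ × ℝ = ℝ^{n+1}`. -/
def dirv {n : ℕ} (i : Fin (n+1)) : En n × ℝ :=
  if h : (i : ℕ) < n then (EuclideanSpace.single ⟨i, h⟩ 1, 0) else (0, 1)

/-- First directional derivative. -/
def D1 {n : ℕ} (Ψ : En n × ℝ → ℝ) (p v : En n × ℝ) : ℝ := fderiv ℝ Ψ p v

/-- Second directional derivative. -/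
def D2 {n : ℕ} (Ψ : En n × ℝ → ℝ) (p v w : En n × ℝ) : ℝ :=
  fderiv ℝ (fun q => fderiv ℝ Ψ q w) p v

/-- The `(n+1) × (n+1)` matrix of condition (1.9). -/
def Cond19Mat {n : ℕ} (k : ℕ) (ψ : En n → ℝ → ℝ) (x : En n) (z : ℝ) :
    Matrix (Fin (n+1)) (Fin (n+1)) ℝ :=
  Matrix.of fun i j =>
    ((k+1 : ℝ)/(k:ℝ)) * D1 (fun p => ψ p.1 p.2) (x, z) (dirv i)
        * D1 (fun p => ψ p.1 p.2) (x, z) (dirv j) / ψ x z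
      - D2 (fun p => ψ p.1 p.2) (x, z) (dirv i) (dirv j)
      + (if (i:ℕ) < n then
           (if (j:ℕ) < n then
              (if i = j then D1 (fun p => ψ p.1 p.2) (x, z) (0,1) / z - (k:ℝ) * ψ x z / z^2
               else 0)
            else - D1 (fun p => ψ p.1 p.2) (x, z) (dirv i) / z)
         else
           (if (j:ℕ) < n then - D1 (fun p => ψ p.1 p.2) (x, z) (dirv j) / z
            else - (k:ℝ) * ψ x z / z^2 - D1 (fun p => ψ p.1 p.2) (x, z) (0,1) / z))

/-- Condition (1.9). -/
def Cond19 {n : ℕ} (k : ℕ) (Ω : Set (En n)) (ψ : En n → ℝ → ℝ) : Prop :=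
  ∀ x ∈ Ω, ∀ z : ℝ, 0 < z → (Cond19Mat k ψ x z).PosSemidef


section AuxMatrix
open Matrix BigOperators Finset Polynomial

variable {R : Type*} [CommRing R] {ι : Type*} [Fintype ι] [DecidableEq ι]

/-- principal submatrix on a finset -/
abbrev psub (M : Matrix ι ι R) (s : Finset ι) :
    Matrix {i // i ∈ s} {i // i ∈ s} R :=
  M.submatrix (fun i => (i : ι)) (fun i => (i : ι))

lemma det_eq_one_rows (N : Matrix ι ι R) (s : Finset ι)
    (h : ∀ i ∉ s, N i = (1 : Matrix ι ι R) i) :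
    N.det = (psub N s).det := by
  classical
  let e := Equiv.sumCompl (fun i => i ∈ s)
  have h1 : N.submatrix e e =
      fromBlocks (psub N s) (N.submatrix (fun i : {i // i ∈ s} => (i : ι))
        (fun i : {i // ¬ i ∈ s} => (i : ι))) 0 1 := by
    ext i j
    rcases i with i | i <;> rcases j with j | j <;>
      simp only [submatrix_apply, fromBlocks_apply₁₁, fromBlocks_apply₁₂,
        fromBlocks_apply₂₁, fromBlocks_apply₂₂, psub, Equiv.sumCompl_apply_inl,
        Equiv.sumCompl_apply_inr, e]
    · rw [h i i.2]
      simp only [Matrix.one_apply, Matrix.zero_apply]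
      refine if_neg (fun hc => i.2 ?_)
      rw [hc]; exact j.2
    · rw [h i i.2]
      simp only [Matrix.one_apply]
      congr 1
      simp [Subtype.ext_iff]
  rw [← Matrix.det_submatrix_equiv_self e N, h1, Matrix.det_fromBlocks_zero₂₁, det_one, mul_one]

lemma det_add_smul_one (M : Matrix ι ι R) (r : R) :
    (M + r • (1 : Matrix ι ι R)).det
      = ∑ s : Finset ι, r ^ (Fintype.card ι - s.card) * (psub M s).det := by
  classical
  have key := (Matrix.detRowAlternating :
      (ι → R) [⋀^ι]→ₗ[R] R).toMultilinearMap.map_add_univ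
      (fun i => M i) (fun i => r • (1 : Matrix ι ι R) i)
  have h0 : (M + r • (1 : Matrix ι ι R)).det
      = (Matrix.detRowAlternating : (ι → R) [⋀^ι]→ₗ[R] R).toMultilinearMap
        ((fun i => M i) + (fun i => r • (1 : Matrix ι ι R) i)) := rfl
  rw [h0, key]
  refine Finset.sum_congr rfl fun s _ => ?_
  set m : ι → ι → R := s.piecewise M (fun i => (1 : Matrix ι ι R) i) with hm
  have hpw : s.piecewise (fun i => M i) (fun i => r • (1 : Matrix ι ι R) i)
      = sᶜ.piecewise (fun i => r • m i) m := by
    funext i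
    by_cases hi : i ∈ s
    · rw [Finset.piecewise_eq_of_mem _ _ _ hi,
        Finset.piecewise_eq_of_notMem _ _ _ (by simpa using hi), hm]
      exact (Finset.piecewise_eq_of_mem _ _ _ hi).symm
    · rw [Finset.piecewise_eq_of_notMem _ _ _ hi,
        Finset.piecewise_eq_of_mem _ _ _ (by simpa using hi), hm]
      exact congrArg (fun x => r • x) (Finset.piecewise_eq_of_notMem _ _ _ hi).symm
  rw [hpw, (Matrix.detRowAlternating :
      (ι → R) [⋀^ι]→ₗ[R] R).toMultilinearMap.map_piecewise_smul]
  have hcard : sᶜ.card = Fintype.card ι - s.card := by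
    simp [Finset.card_compl]
  rw [Finset.prod_const, hcard, smul_eq_mul]
  congr 1
  have h2 : (Matrix.detRowAlternating : (ι → R) [⋀^ι]→ₗ[R] R).toMultilinearMap m
      = Matrix.det (Matrix.of m) := rfl
  rw [h2, det_eq_one_rows (Matrix.of m) s]
  · congr 1
    ext i j
    simp only [psub, submatrix_apply, Matrix.of_apply, hm]
    exact congrFun (Finset.piecewise_eq_of_mem _ _ _ i.2) _
  · intro i hi
    funext j
    simp only [Matrix.of_apply, hm]
    exact congrFun (Finset.piecewise_eq_of_notMem _ _ _ hi) j

lemma psd_det_nonneg {M : Matrix ι ι ℝ} (hM : M.PosSemidef) : 0 ≤ M.det := by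
  exact hM.det_nonneg

lemma psd_posDef_of_det_ne_zero {M : Matrix ι ι ℝ} (hM : M.PosSemidef)
    (hd : M.det ≠ 0) : M.PosDef := by
  exact hM.posDef_iff_det_ne_zero.mpr hd

lemma det_one_add_psd {S : Matrix ι ι ℝ} (hS : S.PosSemidef) :
    1 ≤ (1 + S).det := by
  classical
  have h1 : (1 + S) = S + (1 : ℝ) • (1 : Matrix ι ι ℝ) := by
    rw [one_smul, add_comm]
  rw [h1, det_add_smul_one]
  have h_empty : (1:ℝ) ^ (Fintype.card ι - (∅ : Finset ι).card) * (psub S ∅).det = 1 := by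
    haveI : IsEmpty {i // i ∈ (∅ : Finset ι)} :=
      ⟨fun x => (Finset.notMem_empty _ x.2)⟩
    rw [Matrix.det_isEmpty, one_pow, mul_one]
  calc (1:ℝ) = (1:ℝ) ^ (Fintype.card ι - (∅ : Finset ι).card) * (psub S ∅).det := h_empty.symm
    _ ≤ ∑ s : Finset ι, (1:ℝ) ^ (Fintype.card ι - s.card) * (psub S s).det := by
        refine Finset.single_le_sum
          (f := fun s : Finset ι => (1:ℝ) ^ (Fintype.card ι - s.card) * (psub S s).det)
          (fun s _ => ?_) (Finset.mem_univ ∅)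
        simp only [one_pow, one_mul]
        exact psd_det_nonneg (hS.submatrix (fun i : {i // i ∈ s} => (i : ι)))

open scoped MatrixOrder in
lemma det_mono_pd {A Q : Matrix ι ι ℝ} (hA : A.PosDef) (hQ : Q.PosSemidef) :
    A.det ≤ (A + Q).det := by
  classical
  set s := CFC.sqrt A with hs
  have hss : s * s = A := CFC.sqrt_mul_sqrt_self A hA.posSemidef.nonneg
  have hdetA : 0 < A.det := hA.det_pos
  have hdets : s.det ≠ 0 := by
    intro h
    rw [← hss, Matrix.det_mul, h, mul_zero] at hdetA
    exact lt_irrefl _ hdetA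
  have hsinv : s * s⁻¹ = 
1 := Matrix.mul_nonsing_inv s (isUnit_iff_ne_zero.mpr hdets)
  have hinvs : s⁻¹ * s = 1 := Matrix.nonsing_inv_mul s (isUnit_iff_ne_zero.mpr hdets)
  have hherm : s⁻¹ᴴ = s⁻¹ := by
    rw [Matrix.conjTranspose_nonsing_inv, (CFC.sqrt_nonneg A).posSemidef.isHermitian]
  have hR : ((s⁻¹)ᴴ * Q * s⁻¹).PosSemidef := hQ.conjTranspose_mul_mul_same s⁻¹
  rw [hherm] at hR
  have hQ' : s * (s⁻¹ * Q * s⁻¹) * s = Q := by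
    calc s * (s⁻¹ * Q * s⁻¹) * s = (s * s⁻¹) * Q * (s⁻¹ * s) := by
          simp only [Matrix.mul_assoc]
      _ = Q := by rw [hsinv, hinvs, one_mul, Matrix.mul_one]
  have hkey : A + Q = s * (1 + s⁻¹ * Q * s⁻¹) * s := by
    rw [Matrix.mul_add, Matrix.add_mul, Matrix.mul_one, hss, hQ']
  rw [hkey, Matrix.det_mul, Matrix.det_mul]
  have h1 : 1 ≤ (1 + s⁻¹ * Q * s⁻¹).det := det_one_add_psd hR
  have hs2 : s.det * s.det = A.det := by rw [← Matrix.det_mul, hss]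
  calc A.det = s.det * 1 * s.det := by rw [mul_one, mul_comm, hs2]
    _ ≤ s.det * (1 + s⁻¹ * Q * s⁻¹).det * s.det := by
        nlinarith [hs2, hdetA, h1, sq_nonneg s.det]

lemma det_mono_psd {A Q : Matrix ι ι ℝ} (hA : A.PosSemidef) (hQ : Q.PosSemidef) :
    A.det ≤ (A + Q).det := by
  by_cases hd : A.det = 0
  · rw [hd]
    exact psd_det_nonneg (hA.add hQ)
  · exact det_mono_pd (psd_posDef_of_det_ne_zero hA hd) hQ

variable {n : ℕ}

lemma charpoly_eq_sum (A : Matrix (Fin n) (Fin n) ℝ) :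
    A.charpoly = ∑ s : Finset (Fin n),
      Polynomial.C ((-1 : ℝ) ^ s.card * (psub A s).det) * Polynomial.X ^ (n - s.card) := by
  classical
  have h1 : A.charpoly = ((-(A.map Polynomial.C)) +
      (Polynomial.X : ℝ[X]) • (1 : Matrix (Fin n) (Fin n) ℝ[X])).det := by
    rw [Matrix.charpoly]
    congr 1
    ext i j
    simp [Matrix.charmatrix_apply, Matrix.add_apply, Matrix.smul_apply, Matrix.one_apply,
      Matrix.sub_apply, Matrix.map_apply]
    by_cases h : i = j <;> simp [h] <;> ring
  rw [h1, det_add_smul_one]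
  simp only [Fintype.card_fin]
  refine Finset.sum_congr rfl fun s _ => ?_
  have h2 : psub (-(A.map Polynomial.C)) s = -((psub A s).map Polynomial.C) := by
    ext i j
    simp [psub, Matrix.map_apply]
  rw [h2, Matrix.det_neg, ← RingHom.mapMatrix_apply, ← RingHom.map_det]
  have hcs : Fintype.card {i // i ∈ s} = s.card := Fintype.card_coe s
  rw [hcs, _root_.map_mul, map_pow, map_neg, Polynomial.C_1]
  ring

lemma sigmaElem_eq_sum_minors (k : ℕ) (hk : k ≤ n) (A : Matrix (Fin n) (Fin n) ℝ) :
    sigmaElem k A = ∑ s ∈ Finset.univ.filter (fun s : Finset (Fin n) => s.card = k),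
      (psub A s).det := by
  classical
  rw [sigmaElem, charpoly_eq_sum, Polynomial.finset_sum_coeff]
  have h1 : ∀ s : Finset (Fin n),
      (Polynomial.C ((-1 : ℝ) ^ s.card * (psub A s).det) * Polynomial.X ^ (n - s.card)).coeff (n - k)
      = if s.card = k then (-1 : ℝ) ^ k * (psub A s).det else 0 := by
    intro s
    rw [Polynomial.coeff_C_mul, Polynomial.coeff_X_pow]
    have hsc : s.card ≤ n := by
      simpa using Finset.card_le_card (Finset.subset_univ s)
    by_cases h : s.card = k
    · rw [if_pos (by omega), if_pos h, h, mul_one]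
    · rw [if_neg (by omega), mul_zero, if_neg h]
  rw [Finset.sum_congr rfl (fun s _ => h1 s), Finset.sum_ite, Finset.sum_const, smul_zero,
    add_zero, ← Finset.mul_sum, ← mul_assoc, ← pow_add, Even.neg_one_pow ⟨k, rfl⟩, one_mul]

lemma psub_add (A Q : Matrix (Fin n) (Fin n) ℝ) (s : Finset (Fin n)) :
    psub (A + Q) s = psub A s + psub Q s := by
  ext i j; simp [psub]

lemma sigmaElem_mono (k : ℕ) (hk : k ≤ n) {A B : Matrix (Fin n) (Fin n) ℝ}
    (hA : A.PosSemidef) (hBA : (B - A).PosSemidef) :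
    sigmaElem k A ≤ sigmaElem k B := by
  classical
  rw [sigmaElem_eq_sum_minors k hk, sigmaElem_eq_sum_minors k hk]
  refine Finset.sum_le_sum fun s _ => ?_
  have hB : B = A + (B - A) := by abel
  rw [hB, psub_add]
  exact det_mono_psd (hA.submatrix (fun i : {i // i ∈ s} => (i : Fin n)))
    (hBA.submatrix (fun i : {i // i ∈ s} => (i : Fin n)))


lemma psd_smul {ι : Type*} [Fintype ι] {c : ℝ} {M : Matrix ι ι ℝ} (hc : 0 ≤ c)
    (hM : M.PosSemidef) : (c • M).PosSemidef := by
  refine posSemidef_iff_dotProduct_mulVec.mpr ⟨?_, fun x => ?_⟩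
  · have h1 := hM.isHermitian
    rw [Matrix.IsHermitian] at h1 ⊢
    rw [Matrix.conjTranspose_smul, h1]
    congr 1
  · have h2 := hM.dotProduct_mulVec_nonneg x
    rw [Matrix.smul_mulVec, dotProduct_smul, smul_eq_mul]
    exact mul_nonneg hc h2

end AuxMatrix

section AuxCalc
open Filter Set

lemma second_deriv_test {g : ℝ → ℝ} {c : ℝ}
    (hg : ∀ᶠ t in nhds (0:ℝ), DifferentiableAt ℝ g t)
    (hd : HasDerivAt (deriv g) c 0) (h0 : deriv g 0 = 0)
    (hmax : IsLocalMax g 0) : c ≤ 0 := by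
  by_contra hc
  push_neg at hc
  have hslope : Tendsto (slope (deriv g) 0) (nhdsWithin 0 {(0:ℝ)}ᶜ) (nhds c) :=
    hasDerivAt_iff_tendsto_slope.mp hd
  have hev : ∀ᶠ t in nhdsWithin 0 {(0:ℝ)}ᶜ, 0 < slope (deriv g) 0 t :=
    hslope.eventually (eventually_gt_nhds hc)
  -- turn into a neighborhood statement
  rw [eventually_nhdsWithin_iff] at hev
  obtain ⟨ε1, hε1, h1⟩ := Metric.eventually_nhds_iff.mp hev
  obtain ⟨ε2, hε2, h2⟩ := Metric.eventually_nhds_iff.mp hg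
  obtain ⟨ε3, hε3, h3⟩ := Metric.eventually_nhds_iff.mp hmax
  set δ := min ε1 (min ε2 ε3) / 2 with hδ
  have hδpos : 0 < δ := by positivity
  have hδ1 : δ < ε1 := by
    have : min ε1 (min ε2 ε3) ≤ ε1 := min_le_left _ _
    rw [hδ]; linarith [lt_min hε2 hε3]
  have hδ2 : δ < ε2 := by
    have h' : min ε1 (min ε2 ε3) ≤ ε2 := le_trans (min_le_right _ _) (min_le_left _ _)
    rw [hδ]; linarith
  have hδ3 : δ < ε3 := by
    have h' : min ε1 (min ε2 ε3) ≤ ε3 := le_trans (min_le_right _ _) (min_le_right _ _)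
    rw [hδ]; linarith
  -- g is strictly monotone on [0, δ]
  have hmono : StrictMonoOn g (Icc 0 δ) := by
    refine strictMonoOn_of_deriv_pos (convex_Icc 0 δ) ?_ ?_
    · intro t ht
      have : DifferentiableAt ℝ g t := by
        refine h2 ?_
        rw [Real.dist_eq]
        obtain ⟨ht1, ht2⟩ := ht
        rw [sub_zero, abs_of_nonneg ht1]
        linarith
      exact this.continuousAt.continuousWithinAt
    · intro t ht
      rw [interior_Icc] at ht
      rcases ht with ⟨ht1, ht2⟩
      have hdist : dist t 0 < ε1 := by
        rw [Real.dist_eq, sub_zero, abs_of_pos ht1]; linarith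
      have hs := h1 hdist (by simpa using ne_of_gt ht1)
      rw [slope_def_field, h0, sub_zero, sub_zero] at hs
      have := mul_pos hs ht1
      rw [div_mul_cancel₀] at this
      · exact this
      · exact ne_of_gt ht1
  have hlt : g 0 < g δ :=
    hmono (left_mem_Icc.mpr hδpos.le) (right_mem_Icc.mpr hδpos.le) hδpos
  have hle : g δ ≤ g 0 := h3 (by rw [Real.dist_eq, sub_zero, abs_of_pos hδpos]; linarith)
  linarith


lemma hessian_nonpos {n : ℕ} {f : En n → ℝ} {Ω : Set (En n)} (hΩ : IsOpen Ω)
    {x₀ : En n} (hx₀ : x₀ ∈ Ω) (hf : ContDiffOn ℝ 2 f Ω)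
    (hmax : IsLocalMax f x₀) (ξ : En n) :
    fderiv ℝ (fderiv ℝ f) x₀ ξ ξ ≤ 0 := by
  set D := fderiv ℝ (fderiv ℝ f) x₀ with hD
  -- differentiability facts
  have hfd : ∀ y ∈ Ω, DifferentiableAt ℝ f y := fun y hy =>
    (hf.differentiableOn (by norm_num)).differentiableAt (hΩ.mem_nhds hy)
  have hf1 : ContDiffOn ℝ 1 (fderiv ℝ f) Ω := hf.fderiv_of_isOpen hΩ (by norm_num)
  have hfd1 : DifferentiableAt ℝ (fderiv ℝ f) x₀ :=
    ((hf1.differentiableOn (by norm_num)).differentiableAt (hΩ.mem_nhds hx₀))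
  have hDf : HasFDerivAt (fderiv ℝ f) D x₀ := hfd1.hasFDerivAt
  -- the line map
  set φ : ℝ → En n := fun t => x₀ + t • ξ with hφ
  have hφd : ∀ t : ℝ, HasDerivAt φ ξ t := by
    intro t
    have h1 : HasDerivAt (fun t : ℝ => t • ξ) ((1:ℝ) • ξ) t := (hasDerivAt_id t).smul_const ξ
    rw [one_smul] at h1
    exact h1.const_add x₀
  have hφ0 : φ 0 = x₀ := by simp [hφ]
  have hφc : ContinuousAt φ 0 := (hφd 0).continuousAt
  have hU : ∀ᶠ t in nhds (0:ℝ), φ t ∈ Ω := by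
    have := hφc.tendsto
    rw [hφ0] at this
    exact this.eventually (hΩ.eventually_mem hx₀)
  set g : ℝ → ℝ := fun t => f (φ t) with hg
  have hg' : ∀ t : ℝ, φ t ∈ Ω → HasDerivAt g (fderiv ℝ f (φ t) ξ) t := fun t ht =>
    ((hfd _ ht).hasFDerivAt.comp_hasDerivAt t (hφd t))
  have hgd : ∀ᶠ t in nhds (0:ℝ), DifferentiableAt ℝ g t :=
    hU.mono fun t ht => (hg' t ht).differentiableAt
  have hderiv : ∀ᶠ t in nhds (0:ℝ), deriv g t = fderiv ℝ f (φ t) ξ :=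
    hU.mono fun t ht => (hg' t ht).deriv
  -- second derivative
  have hh : HasDerivAt (fun t => fderiv ℝ f (φ t) ξ) (D ξ ξ) 0 := by
    have hl : HasFDerivAt (fderiv ℝ f) D (φ 0) := by rw [hφ0]; exact hDf
    have h1 : HasDerivAt (fun t => fderiv ℝ f (φ t)) (D ξ) 0 := by
      have := hl.comp_hasDerivAt (0:ℝ) (hφd 0)
      exact this
    have h2 := h1.clm_apply (hasDerivAt_const (0:ℝ) ξ)
    simpa using h2
  have hD2 : HasDerivAt (deriv g) (D ξ ξ) 0 :=
    hh.congr_of_eventuallyEq (hderiv.mono fun t ht => ht)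
  have hd0 : deriv g 0 = 0 := by
    have h1 : deriv g 0 = fderiv ℝ f (φ 0) ξ := hderiv.self_of_nhds
    rw [h1, hφ0, hmax.fderiv_eq_zero]
    rfl
  have hgmax : IsLocalMax g 0 := by
    have := hφc.tendsto
    rw [hφ0] at this
    have h2 := this.eventually hmax
    refine h2.mono fun t ht => ?_
    simpa [hg, hφ0] using ht
  exact second_deriv_test hgd hD2 hd0 hgmax


lemma euclid_decomp {n : ℕ} (ξ : En n) :
    ξ = ∑ i, ξ i • EuclideanSpace.single i (1:ℝ) := by
  ext j
  have hsum : (∑ i, ξ i • EuclideanSpace.single i (1:ℝ)) j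
      = ∑ i, (ξ i • EuclideanSpace.single i (1:ℝ)) j := by
    rw [WithLp.ofLp_sum]
    exact Finset.sum_apply j Finset.univ _
  rw [hsum]
  simp [EuclideanSpace.single_apply, smul_eq_mul, mul_ite, mul_one, mul_zero]

lemma clm_bilinear {n : ℕ} (D : En n →L[ℝ] En n →L[ℝ] ℝ) (ξ : En n) :
    D ξ ξ = ∑ i, ∑ j, ξ i * ξ j * D (EuclideanSpace.single i 1) (EuclideanSpace.single j 1) := by
  have hdec := euclid_decomp ξ
  have h1 : D ξ = ∑ i, ξ i • D (EuclideanSpace.single i 1) := by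
    conv_lhs => rw [hdec]
    rw [map_sum]
    exact Finset.sum_congr rfl fun i _ => by rw [map_smul]
  have h2 : ∀ i, D (EuclideanSpace.single i 1) ξ
      = ∑ j, ξ j * D (EuclideanSpace.single i 1) (EuclideanSpace.single j 1) := by
    intro i
    conv_lhs => rw [hdec]
    rw [map_sum]
    exact Finset.sum_congr rfl fun j _ => by rw [map_smul, smul_eq_mul]
  rw [h1, ContinuousLinearMap.sum_apply]
  refine Finset.sum_congr rfl fun i _ => ?_
  rw [ContinuousLinearMap.smul_apply, smul_eq_mul, h2 i, Finset.mul_sum]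
  exact Finset.sum_congr rfl fun j _ => by ring

lemma clm_bilinear' {n : ℕ} (D : En n →L[ℝ] En n →L[ℝ] ℝ) (c : Fin n → ℝ) :
    D ((WithLp.equiv 2 (Fin n → ℝ)).symm c) ((WithLp.equiv 2 (Fin n → ℝ)).symm c)
      = ∑ i, ∑ j, c i * c j * D (EuclideanSpace.single i 1) (EuclideanSpace.single j 1) := by
  have h := clm_bilinear D ((WithLp.equiv 2 (Fin n → ℝ)).symm c)
  simpa using h

lemma phess_eq_snd {n : ℕ} {f : En n → ℝ} {x₀ : En n}
    (h : DifferentiableAt ℝ (fderiv ℝ f) x₀) (i j : Fin n) :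
    phess f x₀ i j
      = fderiv ℝ (fderiv ℝ f) x₀ (EuclideanSpace.single i 1) (EuclideanSpace.single j 1) := by
  set L : (En n →L[ℝ] ℝ) →L[ℝ] ℝ :=
    ContinuousLinearMap.apply ℝ ℝ (EuclideanSpace.single j (1:ℝ)) with hL
  have h1 : HasFDerivAt (L ∘ fderiv ℝ f) (L.comp (fderiv ℝ (fderiv ℝ f) x₀)) x₀ :=
    L.hasFDerivAt.comp x₀ h.hasFDerivAt
  have h2 : (fun y => fderiv ℝ f y (EuclideanSpace.single j 1)) = (L ∘ fderiv ℝ f) := rfl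
  rw [phess, h2, h1.fderiv]
  rfl

end AuxCalc

open Matrix in
/-- Lemma: maximum-principle type comparison: if `σ_k(κ[v]) < σ_k(κ[u])` on a
domain and `u − v` has a local maximum at `x₀`, then `u(x₀) ≠ v(x₀)`. -/
theorem statement4 {n : ℕ} (k : ℕ) (hk1 : 1 ≤ k) (hkn : k ≤ n)
    (Ω' : Set (En n)) (hΩo : IsOpen Ω') (hΩc : IsConnected Ω')
    (u v : En n → ℝ)
    (hu : ContDiffOn ℝ 2 u Ω') (hv : ContDiffOn ℝ 2 v Ω')
    (hupos : ∀ x ∈ Ω', 0 < u x) (hvpos : ∀ x ∈ Ω', 0 < v x)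
    (huconv : ∀ x ∈ Ω', (curvMat u x).PosSemidef)
    (hvconv : ∀ x ∈ Ω', (curvMat v x).PosSemidef)
    (hlt : ∀ x ∈ Ω', sigmaElem k (curvMat v x) < sigmaElem k (curvMat u x))
    (x₀ : En n) (hx₀ : x₀ ∈ Ω')
    (hmax : IsLocalMax (fun x => u x - v x) x₀) :
    u x₀ ≠ v x₀ := by
  
  intro heq
  have hfe : ∀ᶠ y in nhds x₀, y ∈ Ω' := hΩo.eventually_mem hx₀
  set f : En n → ℝ := fun x => u x - v x with hfdef
  have hfC : ContDiffOn ℝ 2 f Ω' := hu.sub hv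
  have hud : ∀ y ∈ Ω', DifferentiableAt ℝ u y := fun y hy =>
    (hu.differentiableOn (by norm_num)).differentiableAt (hΩo.mem_nhds hy)
  have hvd : ∀ y ∈ Ω', DifferentiableAt ℝ v y := fun y hy =>
    (hv.differentiableOn (by norm_num)).differentiableAt (hΩo.mem_nhds hy)
  have hfderiv_eq : ∀ y ∈ Ω', fderiv ℝ f y = fderiv ℝ u y - fderiv ℝ v y := by
    intro y hy
    rw [hfdef]
    exact fderiv_sub (hud y hy) (hvd y hy)
  have hgrad0 : fderiv ℝ f x₀ = 0 := hmax.fderiv_eq_zero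
  have huv : fderiv ℝ u x₀ = fderiv ℝ v x₀ := by
    have h1 := hfderiv_eq x₀ hx₀
    rw [hgrad0] at h1
    exact sub_eq_zero.mp h1.symm
  have hpg : pgrad u x₀ = pgrad v x₀ := by
    funext i
    rw [pgrad, pgrad, huv]
  have hwg : wgt u x₀ = wgt v x₀ := by rw [wgt, wgt, hpg]
  have hgam : gam u x₀ = gam v x₀ := by
    funext i a
    rw [gam, gam, hpg, hwg]
  -- second derivative facts
  have hDud : DifferentiableAt ℝ (fderiv ℝ u) x₀ :=
    (((hu.fderiv_of_isOpen (m := 1) hΩo (by norm_num)).differentiableOn one_ne_zero).differentiableAt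
      (hΩo.mem_nhds hx₀))
  have hDvd : DifferentiableAt ℝ (fderiv ℝ v) x₀ :=
    (((hv.fderiv_of_isOpen (m := 1) hΩo (by norm_num)).differentiableOn one_ne_zero).differentiableAt
      (hΩo.mem_nhds hx₀))
  have hDfd : DifferentiableAt ℝ (fderiv ℝ f) x₀ :=
    (((hfC.fderiv_of_isOpen (m := 1) hΩo (by norm_num)).differentiableOn one_ne_zero).differentiableAt
      (hΩo.mem_nhds hx₀))
  have hDf_eq : fderiv ℝ (fderiv ℝ f) x₀
      = fderiv ℝ (fderiv ℝ u) x₀ - fderiv ℝ (fderiv ℝ v) x₀ := by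
    have hev : fderiv ℝ f =ᶠ[nhds x₀] fun y => fderiv ℝ u y - fderiv ℝ v y :=
      hfe.mono fun y hy => hfderiv_eq y hy
    rw [hev.fderiv_eq]
    exact fderiv_sub hDud hDvd
  have hquad : ∀ ξ : En n, fderiv ℝ (fderiv ℝ f) x₀ ξ ξ ≤ 0 := fun ξ =>
    hessian_nonpos hΩo hx₀ hfC hmax ξ
  have hsym : ∀ w1 w2 : En n,
      fderiv ℝ (fderiv ℝ f) x₀ w1 w2 = fderiv ℝ (fderiv ℝ f) x₀ w2 w1 := by
    intro w1 w2
    refine second_derivative_symmetric_of_eventually (f := f) (f' := fderiv ℝ f) ?_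
      hDfd.hasFDerivAt w1 w2
    exact hfe.mono fun y hy =>
      ((hfC.differentiableOn (by norm_num)).differentiableAt (hΩo.mem_nhds hy)).hasFDerivAt
  have hpu : ∀ i j, phess u x₀ i j
      = fderiv ℝ (fderiv ℝ u) x₀ (EuclideanSpace.single i 1) (EuclideanSpace.single j 1) :=
    fun i j => phess_eq_snd hDud i j
  have hpv : ∀ i j, phess v x₀ i j
      = fderiv ℝ (fderiv ℝ v) x₀ (EuclideanSpace.single i 1) (EuclideanSpace.single j 1) :=
    fun i j => phess_eq_snd hDvd i j
  have hterm : ∀ a b : Fin n,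
      -(fderiv ℝ (fderiv ℝ f) x₀ (EuclideanSpace.single a 1) (EuclideanSpace.single b 1))
        = phess v x₀ a b - phess u x₀ a b := by
    intro a b
    rw [hpv a b, hpu a b, hDf_eq]
    simp only [ContinuousLinearMap.sub_apply]
    ring
  -- scalars
  have hz0 : 0 < u x₀ := hupos x₀ hx₀
  have hw0 : 0 < wgt u x₀ := by
    rw [wgt]
    apply Real.sqrt_pos.mpr
    positivity
  -- matrices
  set N : Matrix (Fin n) (Fin n) ℝ := Matrix.of fun i j =>
    -(fderiv ℝ (fderiv ℝ f) x₀ (EuclideanSpace.single i 1) (EuclideanSpace.single j 1)) with hN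
  set Γ : Matrix (Fin n) (Fin n) ℝ := Matrix.of fun i j => gam u x₀ i j with hΓ
  have hNherm : N.IsHermitian := by
    rw [Matrix.IsHermitian]
    ext i j
    rw [Matrix.conjTranspose_apply, hN]
    simp only [Matrix.of_apply, star_trivial]
    exact congrArg Neg.neg (hsym (EuclideanSpace.single j 1) (EuclideanSpace.single i 1))
  have hNpsd : N.PosSemidef := by
    refine Matrix.posSemidef_iff_dotProduct_mulVec.mpr ⟨hNherm, fun c => ?_⟩
    have hcc : star c = c := by funext i; simp
    rw [hcc]
    have hexp := clm_bilinear' (fderiv ℝ (fderiv ℝ f) x₀) c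
    have hq := hquad ((WithLp.equiv 2 (Fin n → ℝ)).symm c)
    have hkey : c ⬝ᵥ N *ᵥ c = -(fderiv ℝ (fderiv ℝ f) x₀
        ((WithLp.equiv 2 (Fin n → ℝ)).symm c) ((WithLp.equiv 2 (Fin n → ℝ)).symm c)) := by
      rw [hexp]
      calc c ⬝ᵥ N *ᵥ c = ∑ i, ∑ j, c i * (N i j * c j) := by
            simp only [dotProduct, Matrix.mulVec]
            exact Finset.sum_congr rfl fun i _ => by rw [Finset.mul_sum]
        _ = -(∑ i, ∑ j, c i * c j *
              (fderiv ℝ (fderiv ℝ f) x₀ (EuclideanSpace.single i 1)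
                (EuclideanSpace.single j 1))) := by
            rw [← Finset.sum_neg_distrib]
            refine Finset.sum_congr rfl fun i _ => ?_
            rw [← Finset.sum_neg_distrib]
            refine Finset.sum_congr rfl fun j _ => ?_
            rw [hN]
            simp only [Matrix.of_apply]
            ring
    rw [hkey]
    linarith
  have hΓherm : Γᴴ = Γ := by
    ext i j
    rw [Matrix.conjTranspose_apply, hΓ]
    simp only [Matrix.of_apply, star_trivial]
    rw [gam, gam]
    have h1 : (if j = i then (1:ℝ) else 0) = (if i = j then (1:ℝ) else 0) := by
      simp [eq_comm]
    rw [h1]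
    ring
  have hcong : (Γ * N * Γ).PosSemidef := by
    have h1 := hNpsd.mul_mul_conjTranspose_same Γ
    rwa [hΓherm] at h1
  -- the matrix identity
  have hBA : curvMat v x₀ - curvMat u x₀ = (u x₀ / wgt u x₀) • (Γ * N * Γ) := by
    ext i j
    simp only [curvMat, Matrix.sub_apply, Matrix.of_apply, Matrix.smul_apply, smul_eq_mul,
      Matrix.mul_apply, hN, hΓ]
    rw [← hgam, ← hwg, ← heq]
    have hswap : ∑ l, (∑ a, gam u x₀ i a *
          -(fderiv ℝ (fderiv ℝ f) x₀ (EuclideanSpace.single a 1) (EuclideanSpace.single l 1)))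
            * gam u x₀ l j
        = (∑ a, ∑ l, gam u x₀ i a * phess v x₀ a l * gam u x₀ l j)
          - (∑ a, ∑ l, gam u x₀ i a * phess u x₀ a l * gam u x₀ l j) := by
      calc ∑ l, (∑ a, gam u x₀ i a *
          -(fderiv ℝ (fderiv ℝ f) x₀ (EuclideanSpace.single a 1) (EuclideanSpace.single l 1)))
            * gam u x₀ l j
          = ∑ l, ∑ a, gam u x₀ i a *
              -(fderiv ℝ (fderiv ℝ f) x₀ (EuclideanSpace.single a 1)
                (EuclideanSpace.single l 1)) * gam u x₀ l j := by
            exact Finset.sum_congr rfl fun l _ => by rw [Finset.sum_mul]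
        _ = ∑ a, ∑ l, gam u x₀ i a *
              -(fderiv ℝ (fderiv ℝ f) x₀ (EuclideanSpace.single a 1)
                (EuclideanSpace.single l 1)) * gam u x₀ l j := Finset.sum_comm
        _ = (∑ a, ∑ l, gam u x₀ i a * phess v x₀ a l * gam u x₀ l j)
            - (∑ a, ∑ l, gam u x₀ i a * phess u x₀ a l * gam u x₀ l j) := by
            rw [← Finset.sum_sub_distrib]
            refine Finset.sum_congr rfl fun a _ => ?_
            rw [← Finset.sum_sub_distrib]
            refine Finset.sum_congr rfl fun l _ => ?_
            rw [hterm a l]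
            ring
    rw [hswap]
    ring
  have hBApsd : (curvMat v x₀ - curvMat u x₀).PosSemidef := by
    rw [hBA]
    exact psd_smul (div_nonneg hz0.le hw0.le) hcong
  have hmono := sigmaElem_mono k hkn (huconv x₀ hx₀) hBApsd
  exact absurd (hlt x₀ hx₀) (not_lt.mpr hmono)
end
end

section
/- Let σ ∈ (0,1), c ≥ 0, and let Ω ⊂ ℝⁿ be a bounded domain. Let u be a positive C² function on Ω whose graph Σ is strictly locally convex, continuous up to ∂Ω with u = c on ∂Ω, and satisfying σ_k(κ[u]) > C(n,k)·σ^k (= σ_k(σ,…,σ)) in Ω. Let B₀ = B_R(b) ⊂ ℝ^{n+1} be the open ball of radius R centered at b = (b', σR) with b' ∉ Ω̄ and dist(b', ∂Ω) > c/σ. If B₀ is disjoint from Ω̄ × {c}, then B₀ is disjoint from Σ, i.e. (x, u(x)) ∉ B₀ for every x ∈ Ω. -/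
open scoped BigOperators
open Metric Set

noncomputable section

/-! ### Auxiliary lemmas for the proof of `statement5` -/

/-- radius of the σ-sphere through the point `(x,t)`. -/
def sphRad {n : ℕ} (σ : ℝ) (b' : En n) (x : En n) (t : ℝ) : ℝ :=
  (Real.sqrt (σ^2*t^2 + (1-σ^2)*((dist x b')^2 + t^2)) - σ*t) / (1-σ^2)

lemma sphRad_nonneg {n : ℕ} {σ : ℝ} (hσ0 : 0 < σ) (hσ1 : σ < 1) (b' x : En n) {t : ℝ}
    (ht : 0 ≤ t) : 0 ≤ sphRad σ b' x t := by
  have h1 : (0:ℝ) < 1 - σ^2 := by nlinarith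
  have h2 : σ*t ≤ Real.sqrt (σ^2*t^2 + (1-σ^2)*((dist x b')^2 + t^2)) := by
    have : σ*t = Real.sqrt ((σ*t)^2) := by
      rw [Real.sqrt_sq (by positivity)]
    rw [this]
    apply Real.sqrt_le_sqrt
    have : (0:ℝ) ≤ (dist x b')^2 + t^2 := by positivity
    nlinarith
  exact div_nonneg (sub_nonneg.mpr h2) h1.le

lemma sphRad_identity {n : ℕ} {σ : ℝ} (hσ0 : 0 < σ) (hσ1 : σ < 1) (b' x : En n) (t r : ℝ) :
    (dist x b')^2 + (t - σ*r)^2 - r^2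
      = (sphRad σ b' x t - r) * ((1-σ^2)*(sphRad σ b' x t + r) + 2*σ*t) := by
  have h1 : (0:ℝ) < 1 - σ^2 := by nlinarith
  have harg : (0:ℝ) ≤ σ^2*t^2 + (1-σ^2)*((dist x b')^2 + t^2) := by positivity
  have hD : (Real.sqrt (σ^2*t^2 + (1-σ^2)*((dist x b')^2 + t^2)))^2
      = σ^2*t^2 + (1-σ^2)*((dist x b')^2 + t^2) := Real.sq_sqrt harg
  unfold sphRad
  set D := Real.sqrt (σ^2*t^2 + (1-σ^2)*((dist x b')^2 + t^2)) with hDdef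
  have hs : (1-σ^2) ≠ 0 := ne_of_gt h1
  have hT : (D - σ*t)/(1-σ^2) * (1-σ^2) = D - σ*t := div_mul_cancel₀ _ hs
  set T := (D - σ*t)/(1-σ^2) with hTdef
  apply mul_left_cancel₀ hs
  linear_combination -hD - (T*(1-σ^2) + D + σ*t) * hT

lemma sphRad_factor_pos {n : ℕ} {σ : ℝ} (hσ0 : 0 < σ) (hσ1 : σ < 1) (b' x : En n) {t r : ℝ}
    (ht : 0 ≤ t) (hr : 0 < r) :
    0 < (1-σ^2)*(sphRad σ b' x t + r) + 2*σ*t := by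
  have hT := sphRad_nonneg hσ0 hσ1 b' x ht
  have h1 : (0:ℝ) < 1 - σ^2 := by nlinarith
  nlinarith [mul_pos h1 (show (0:ℝ) < sphRad σ b' x t + r by linarith)]

lemma sphRad_lt_iff {n : ℕ} {σ : ℝ} (hσ0 : 0 < σ) (hσ1 : σ < 1) (b' x : En n) {t r : ℝ}
    (ht : 0 ≤ t) (hr : 0 < r) :
    sphRad σ b' x t < r ↔ (dist x b')^2 + (t - σ*r)^2 < r^2 := by
  have hid := sphRad_identity hσ0 hσ1 b' x t r
  have hP := sphRad_factor_pos hσ0 hσ1 b' x ht hr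
  constructor <;> intro h <;> nlinarith

lemma sphRad_le_iff {n : ℕ} {σ : ℝ} (hσ0 : 0 < σ) (hσ1 : σ < 1) (b' x : En n) {t r : ℝ}
    (ht : 0 ≤ t) (hr : 0 < r) :
    sphRad σ b' x t ≤ r ↔ (dist x b')^2 + (t - σ*r)^2 ≤ r^2 := by
  have hid := sphRad_identity hσ0 hσ1 b' x t r
  have hP := sphRad_factor_pos hσ0 hσ1 b' x ht hr
  constructor <;> intro h <;> nlinarith

lemma sphRad_eq_sphere {n : ℕ} {σ : ℝ} (hσ0 : 0 < σ) (hσ1 : σ < 1) (b' x : En n) {t r : ℝ}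
    (ht : 0 ≤ t) (hr : 0 < r) (h : sphRad σ b' x t = r) :
    (dist x b')^2 + (t - σ*r)^2 = r^2 := by
  have hid := sphRad_identity hσ0 hσ1 b' x t r
  rw [h] at hid; nlinarith

lemma sphRad_pos {n : ℕ} {σ : ℝ} (hσ0 : 0 < σ) (hσ1 : σ < 1) {b' x : En n} {t : ℝ}
    (ht : 0 ≤ t) (hx : x ≠ b') : 0 < sphRad σ b' x t := by
  have h1 : (0:ℝ) < 1 - σ^2 := by nlinarith
  have hd : 0 < dist x b' := dist_pos.mpr hx
  have h2 : σ*t < Real.sqrt (σ^2*t^2 + (1-σ^2)*((dist x b')^2 + t^2)) := by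
    rw [show σ^2*t^2 = (σ*t)^2 by ring]
    refine (Real.lt_sqrt (by positivity)).mpr ?_
    nlinarith [mul_pos h1 (show (0:ℝ) < dist x b'^2 + t^2 by positivity)]
  exact div_pos (sub_pos.mpr h2) h1

lemma sphRad_continuous {n : ℕ} (σ : ℝ) (b' : En n) (hσ1 : σ < 1) (hσ0 : 0 < σ) :
    Continuous (fun q : En n × ℝ => sphRad σ b' q.1 q.2) := by
  unfold sphRad
  fun_prop


lemma dist_sq_eq_sum {n : ℕ} (y b' : En n) : dist y b' ^ 2 = ∑ i, (y i - b' i)^2 := by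
  rw [EuclideanSpace.dist_eq, Real.sq_sqrt (Finset.sum_nonneg fun i _ => sq_nonneg _)]
  exact Finset.sum_congr rfl fun i _ => by rw [Real.dist_eq, sq_abs]

lemma eventually_min_coord {n : ℕ} {b' x₀ : En n}
    (hmin : IsLocalMin (fun y : En n => ∑ i, (y i - b' i)^2) x₀) : x₀ = b' := by
  ext j
  by_contra haj
  have ha : x₀ j - b' j ≠ 0 := sub_ne_zero.mpr haj
  set a : ℝ := x₀ j - b' j with hadef
  set L : ℝ → En n := fun s => x₀ + s • EuclideanSpace.single j (1:ℝ) with hL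
  have hLc : Filter.Tendsto L (nhds 0) (nhds x₀) := by
    have : Continuous L := by continuity
    have := this.tendsto 0
    simpa [hL] using this
  have hev := hLc.eventually hmin
  have hval : ∀ s : ℝ, (fun y : En n => ∑ i, (y i - b' i)^2) (L s)
      = (∑ i, (x₀ i - b' i)^2) + (2*a*s + s^2) := by
    intro s
    have : ∀ i, (L s i - b' i)^2
        = (x₀ i - b' i)^2 + (if i = j then 2*(x₀ i - b' i)*s + s^2 else 0) := by
      intro i
      have hLi : L s i = x₀ i + s * (if i = j then 1 else 0) := by
        simp [hL, EuclideanSpace.single_apply]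
      rw [hLi]
      by_cases h : i = j <;> simp [h] <;> ring
    simp only [this, Finset.sum_add_distrib]
    rw [Finset.sum_ite_eq' (Finset.univ) j (fun i => 2*(x₀ i - b' i)*s + s^2)]
    simp [← hadef]
  rw [Metric.eventually_nhds_iff] at hev
  obtain ⟨ε, hε, hball⟩ := hev
  set m : ℝ := min 1 (ε/(2*|a|+1)) with hm
  have hm0 : 0 < m := by
    apply lt_min one_pos
    positivity
  have hm1 : m ≤ 1 := min_le_left _ _
  set s : ℝ := -a * m with hs
  have hsmall : dist s 0 < ε := by
    rw [Real.dist_eq, sub_zero, hs, abs_mul, abs_neg]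
    have h1 : |m| = m := abs_of_pos hm0
    have h2 : m ≤ ε/(2*|a|+1) := min_le_right _ _
    have h3 : 0 < 2*|a|+1 := by positivity
    rw [h1]
    calc |a| * m ≤ |a| * (ε/(2*|a|+1)) := by
          exact mul_le_mul_of_nonneg_left h2 (abs_nonneg a)
      _ < ε := by
          rw [div_eq_mul_inv]
          rw [show |a| * (ε * (2*|a|+1)⁻¹) = ε * (|a| * (2*|a|+1)⁻¹) by ring]
          have : |a| * (2*|a|+1)⁻¹ < 1 := by
            rw [← div_eq_mul_inv, div_lt_one h3]
            nlinarith [abs_nonneg a]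
          nlinarith [hε]
  have := hball hsmall
  rw [hval s] at this
  simp only at this
  have ha2 : 0 < a^2 := by positivity
  have : 2*a*s + s^2 < 0 := by
    rw [hs]
    have : 2*a*(-a*m) + (-a*m)^2 = a^2 * (m * (m - 2)) := by ring
    rw [this]
    have : m * (m-2) < 0 := by nlinarith
    nlinarith
  linarith [hball hsmall, (hval s).ge]

lemma second_deriv_nonneg_of_isLocalMin {n : ℕ} {G : En n → ℝ} {x₀ : En n} {U : Set (En n)}
    (hU : IsOpen U) (hx₀ : x₀ ∈ U) (hG : ContDiffOn ℝ 2 G U) (hmin : IsLocalMin G x₀)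
    (V : En n) : 0 ≤ fderiv ℝ (fun y => fderiv ℝ G y V) x₀ V := by
  by_contra hcon
  push_neg at hcon
  set c := fderiv ℝ (fun y => fderiv ℝ G y V) x₀ V with hcdef
  obtain ⟨ε, hε, hball⟩ := Metric.isOpen_iff.mp hU x₀ hx₀
  set L : ℝ → En n := fun s => x₀ + s • V with hLdef
  have hline : ∀ s : ℝ, HasDerivAt L V s := by
    intro s
    have h := ((hasDerivAt_id s).smul_const V).const_add x₀
    simpa [hLdef] using h
  have hL0 : L 0 = x₀ := by simp [hLdef]
  set a : ℝ := ε / (‖V‖ + 1) with hadef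
  have hapos : 0 < a := by positivity
  have hmem : ∀ s : ℝ, |s| ≤ a → L s ∈ U := by
    intro s hs
    apply hball
    simp only [hLdef, mem_ball, dist_self_add_left]
    rw [norm_smul, Real.norm_eq_abs]
    calc |s| * ‖V‖ ≤ a * ‖V‖ := mul_le_mul_of_nonneg_right hs (norm_nonneg V)
      _ < ε := by
          rw [hadef]
          have h1 : 0 < ‖V‖ + 1 := by positivity
          rw [div_mul_eq_mul_div, div_lt_iff₀ h1]
          nlinarith [norm_nonneg V]
  have hGdiff : ∀ y ∈ U, DifferentiableAt ℝ G y := fun y hy =>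
    (hG.differentiableOn (by norm_num)).differentiableAt (hU.mem_nhds hy)
  set χ : ℝ → ℝ := fun s => fderiv ℝ G (L s) V with hχdef
  set ψ : ℝ → ℝ := fun s => G (L s) with hψdef
  have hψd : ∀ s : ℝ, |s| ≤ a → HasDerivAt ψ (χ s) s := by
    intro s hs
    exact ((hGdiff _ (hmem s hs)).hasFDerivAt).comp_hasDerivAt s (hline s)
  have hG2 : ContDiffAt ℝ 2 G x₀ := hG.contDiffAt (hU.mem_nhds hx₀)
  have hf' : ContDiffAt ℝ 1 (fderiv ℝ G) x₀ := hG2.fderiv_right (by norm_num)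
  have hFd : DifferentiableAt ℝ (fun y => fderiv ℝ G y V) x₀ :=
    (hf'.differentiableAt one_ne_zero).clm_apply (differentiableAt_const V)
  have hχ0 : HasDerivAt χ c 0 := by
    have hFd' : HasFDerivAt (fun y => fderiv ℝ G y V)
        (fderiv ℝ (fun y => fderiv ℝ G y V) x₀) (L 0) := by
      rw [hL0]; exact hFd.hasFDerivAt
    have h := hFd'.comp_hasDerivAt 0 (hline 0)
    exact h
  have hχzero : χ 0 = 0 := by
    simp [hχdef, hL0, hmin.fderiv_eq_zero]
  have hslope := hasDerivAt_iff_tendsto_slope.mp hχ0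
  have h1 : ∀ᶠ s in nhdsWithin 0 {(0:ℝ)}ᶜ, slope χ 0 s < 0 :=
    hslope.eventually_lt_const hcon
  rw [eventually_nhdsWithin_iff] at h1
  have hψmin : ∀ᶠ s in nhds (0:ℝ), ψ 0 ≤ ψ s := by
    have hLc : Filter.Tendsto L (nhds 0) (nhds x₀) := by
      rw [← hL0]; exact (hline 0).continuousAt.tendsto
    have := hLc.eventually hmin
    simpa [hψdef, hL0] using this
  have hcomb := h1.and hψmin
  rw [Metric.eventually_nhds_iff] at hcomb
  obtain ⟨ε₂, hε₂, hcomb⟩ := hcomb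
  set s₀ : ℝ := min a (ε₂/2) with hs₀def
  have hs₀pos : 0 < s₀ := lt_min hapos (by positivity)
  have hs₀a : s₀ ≤ a := min_le_left _ _
  have hs₀ε : s₀ < ε₂ := lt_of_le_of_lt (min_le_right _ _) (by linarith)
  have hχneg : ∀ ξ ∈ Ioo (0:ℝ) s₀, χ ξ < 0 := by
    intro ξ hξ
    have hd : dist ξ (0:ℝ) < ε₂ := by
      rw [Real.dist_eq, sub_zero, abs_of_pos hξ.1]
      linarith [hξ.2]
    have := (hcomb hd).1 (by simp [Set.mem_compl_iff]; exact ne_of_gt hξ.1)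
    rw [slope_def_field] at this
    have hslope_eq : (χ ξ - χ 0) / (ξ - 0) < 0 := by
      simpa [div_eq_inv_mul] using this
    rw [hχzero, sub_zero, sub_zero] at hslope_eq
    rcases div_neg_iff.mp hslope_eq with ⟨_, h2⟩ | ⟨h1, _⟩
    · linarith [hξ.1]
    · exact h1
  have hcont : ContinuousOn ψ (Icc 0 s₀) := by
    intro y hy
    have : |y| ≤ a := by
      rw [abs_of_nonneg hy.1]; linarith [hy.2]
    exact (hψd y this).continuousAt.continuousWithinAt
  have hderiv : ∀ y ∈ Ioo (0:ℝ) s₀, HasDerivAt ψ (χ y) y := by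
    intro y hy
    refine hψd y ?_
    rw [abs_of_pos hy.1]; linarith [hy.2]
  obtain ⟨ξ, hξmem, hξeq⟩ := exists_hasDerivAt_eq_slope ψ χ hs₀pos hcont hderiv
  have hχξ := hχneg ξ hξmem
  rw [hξeq] at hχξ
  have hψs₀ : ψ s₀ < ψ 0 := by
    rw [sub_zero] at hχξ
    rcases div_neg_iff.mp hχξ with ⟨_, h2⟩ | ⟨h1, _⟩
    · linarith
    · linarith
  have : ψ 0 ≤ ψ s₀ := (hcomb (by rw [Real.dist_eq, sub_zero, abs_of_pos hs₀pos]; exact hs₀ε)).2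
  linarith

lemma clm_apply_expand {n : ℕ} (L : En n →L[ℝ] ℝ) (ξ : Fin n → ℝ) :
    L (∑ i, ξ i • EuclideanSpace.single i (1:ℝ)) = ∑ i, ξ i * L (EuclideanSpace.single i 1) := by
  rw [map_sum]
  congr 1; funext i; rw [map_smul]; simp

lemma V_apply {n : ℕ} (ξ : Fin n → ℝ) (i : Fin n) :
    (∑ j, ξ j • EuclideanSpace.single j (1:ℝ)) i = ξ i := by
  rw [WithLp.ofLp_sum, Finset.sum_apply]
  simp [EuclideanSpace.single_apply]

lemma hasFDerivAt_Phi {n : ℕ} (b' : En n) (y : En n) :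
    HasFDerivAt (fun z : En n => ∑ i, (z i - b' i)^2)
      (∑ i, (2*(y i - b' i)) • (EuclideanSpace.proj i : En n →L[ℝ] ℝ)) y := by
  apply HasFDerivAt.fun_sum
  intro i _
  have h1 : HasFDerivAt (fun z : En n => z i - b' i)
      (EuclideanSpace.proj i : En n →L[ℝ] ℝ) y := by
    simpa using ((EuclideanSpace.proj (𝕜 := ℝ) i).hasFDerivAt (x := y)).sub_const (b' i)
  have h2 := h1.fun_mul h1
  have : (fun z : En n => (z i - b' i)^2) = fun z => (z i - b' i) * (z i - b' i) := by
    funext z; ring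
  rw [this]
  refine h2.congr_fderiv ?_
  rw [two_mul, add_smul]

lemma hasFDerivAt_G {n : ℕ} (b' : En n) (h : ℝ) {u : En n → ℝ} {y : En n}
    (hud : DifferentiableAt ℝ u y) :
    HasFDerivAt (fun z : En n => (∑ i, (z i - b' i)^2) + (u z - h)^2)
      ((∑ i, (2*(y i - b' i)) • (EuclideanSpace.proj i : En n →L[ℝ] ℝ))
        + (2*(u y - h)) • (fderiv ℝ u y)) y := by
  have h1 := hasFDerivAt_Phi b' y
  have hsub := (hud.hasFDerivAt).sub_const h
  have h2 := hsub.fun_mul hsub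
  have heq : (fun z : En n => (u z - h)^2) = fun z => (u z - h) * (u z - h) := by
    funext z; ring
  refine h1.add ?_
  rw [heq]
  refine h2.congr_fderiv ?_
  rw [two_mul, add_smul]

/-- value of the gradient of `G` in coordinate directions -/
lemma fderiv_G_coord {n : ℕ} (b' : En n) (h : ℝ) {u : En n → ℝ} {y : En n}
    (hud : DifferentiableAt ℝ u y) (j : Fin n) :
    fderiv ℝ (fun z : En n => (∑ i, (z i - b' i)^2) + (u z - h)^2) y
        (EuclideanSpace.single j 1)
      = 2*(y j - b' j) + 2*(u y - h) * (pgrad u y j) := by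
  rw [(hasFDerivAt_G b' h hud).fderiv]
  simp only [ContinuousLinearMap.add_apply, ContinuousLinearMap.coe_sum', Finset.sum_apply,
    ContinuousLinearMap.coe_smul', Pi.smul_apply, smul_eq_mul, pgrad]
  congr 1
  · have : ∀ i : Fin n, (EuclideanSpace.proj (𝕜 := ℝ) i) (EuclideanSpace.single j (1:ℝ))
        = if j = i then 1 else 0 := by
      intro i
      simp [EuclideanSpace.single_apply]
      exact if_congr (by constructor <;> intro hh <;> exact hh.symm) rfl rfl
    simp only [this]
    rw [Finset.sum_congr rfl (fun i _ => by
      rw [mul_ite, mul_one, mul_zero] : ∀ i ∈ Finset.univ,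
      2*(y i - b' i) * (if j = i then 1 else 0) = if j = i then 2*(y i - b' i) else 0)]
    rw [Finset.sum_ite_eq Finset.univ j (fun i => 2*(y i - b' i))]
    simp

lemma fderiv_fderiv_G {n : ℕ} (b' : En n) (h : ℝ) {u : En n → ℝ} {Ω : Set (En n)}
    (hΩ : IsOpen Ω) (hu : ContDiffOn ℝ 2 u Ω) {x₀ : En n} (hx₀ : x₀ ∈ Ω) (V : En n) :
    fderiv ℝ (fun y => fderiv ℝ (fun z : En n => (∑ i, (z i - b' i)^2) + (u z - h)^2) y V) x₀ V
      = 2*(∑ i, (V i)^2) + 2*(fderiv ℝ u x₀ V)^2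
        + 2*(u x₀ - h)*(fderiv ℝ (fun y => fderiv ℝ u y V) x₀ V) := by
  have hud : ∀ y ∈ Ω, DifferentiableAt ℝ u y := fun y hy =>
    (hu.differentiableOn (by norm_num)).differentiableAt (hΩ.mem_nhds hy)
  set F : En n → ℝ := fun y => (∑ i, 2*(y i - b' i)*(V i)) + 2*(u y - h)*(fderiv ℝ u y V)
    with hFdef
  have heq : ∀ y ∈ Ω, fderiv ℝ (fun z : En n => (∑ i, (z i - b' i)^2) + (u z - h)^2) y V
      = F y := by
    intro y hy
    rw [(hasFDerivAt_G b' h (hud y hy)).fderiv]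
    simp only [ContinuousLinearMap.add_apply, ContinuousLinearMap.coe_sum', Finset.sum_apply,
      ContinuousLinearMap.coe_smul', Pi.smul_apply, smul_eq_mul, hFdef]
    rfl
  have hev : (fun y => fderiv ℝ (fun z : En n => (∑ i, (z i - b' i)^2) + (u z - h)^2) y V)
      =ᶠ[nhds x₀] F :=
    Filter.eventuallyEq_of_mem (hΩ.mem_nhds hx₀) heq
  rw [hev.fderiv_eq]
  -- now compute fderiv F x₀
  have hF1 : HasFDerivAt (fun y : En n => ∑ i, 2*(y i - b' i)*(V i))
      (∑ i, (2*(V i)) • (EuclideanSpace.proj i : En n →L[ℝ] ℝ)) x₀ := by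
    apply HasFDerivAt.fun_sum
    intro i _
    have h1 : HasFDerivAt (fun z : En n => z i - b' i)
        (EuclideanSpace.proj i : En n →L[ℝ] ℝ) x₀ := by
      simpa using ((EuclideanSpace.proj (𝕜 := ℝ) i).hasFDerivAt (x := x₀)).sub_const (b' i)
    have h2 := (h1.const_mul 2).mul_const (V i)
    refine h2.congr_fderiv ?_
    rw [smul_smul]
    congr 1
    ring
  have hd1 : DifferentiableAt ℝ (fderiv ℝ u) x₀ :=
    ((hu.contDiffAt (hΩ.mem_nhds hx₀)).fderiv_right (m := 1)
      (by norm_num)).differentiableAt one_ne_zero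
  have hdd : DifferentiableAt ℝ (fun y => fderiv ℝ u y V) x₀ :=
    hd1.clm_apply (differentiableAt_const V)
  have hc : HasFDerivAt (fun y => 2*(u y - h)) ((2:ℝ) • fderiv ℝ u x₀) x₀ :=
    ((hud x₀ hx₀).hasFDerivAt.sub_const h).const_mul 2
  have hmul := hc.fun_mul hdd.hasFDerivAt
  have hF := hF1.fun_add hmul
  rw [hF.fderiv]
  simp only [ContinuousLinearMap.add_apply, ContinuousLinearMap.coe_sum', Finset.sum_apply,
    ContinuousLinearMap.coe_smul', Pi.smul_apply, smul_eq_mul]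
  have hproj : ∀ i : Fin n, (EuclideanSpace.proj (𝕜 := ℝ) i) V = V i := fun _ => rfl
  simp only [hproj]
  have hsum : ∑ i, 2*(V i)*(V i) = 2*(∑ i, (V i)^2) := by
    rw [Finset.mul_sum]
    exact Finset.sum_congr rfl (fun i _ => by ring)
  rw [hsum]
  ring

lemma snd_expand {n : ℕ} {u : En n → ℝ} {Ω : Set (En n)}
    (hΩ : IsOpen Ω) (hu : ContDiffOn ℝ 2 u Ω) {x₀ : En n} (hx₀ : x₀ ∈ Ω) (ξ : Fin n → ℝ) :
    fderiv ℝ (fun y => fderiv ℝ u y (∑ j, ξ j • EuclideanSpace.single j (1:ℝ))) x₀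
        (∑ j, ξ j • EuclideanSpace.single j (1:ℝ))
      = ∑ i, ∑ j, ξ i * ξ j * phess u x₀ i j := by
  have hd1 : DifferentiableAt ℝ (fderiv ℝ u) x₀ :=
    ((hu.contDiffAt (hΩ.mem_nhds hx₀)).fderiv_right (m := 1) (by norm_num)).differentiableAt one_ne_zero
  have hdiffj : ∀ j : Fin n,
      DifferentiableAt ℝ (fun y => fderiv ℝ u y (EuclideanSpace.single j 1)) x₀ :=
    fun j => hd1.clm_apply (differentiableAt_const _)
  have hfun : (fun y => fderiv ℝ u y (∑ j, ξ j • EuclideanSpace.single j (1:ℝ)))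
      = fun y => ∑ j, ξ j * (fderiv ℝ u y (EuclideanSpace.single j 1)) :=
    funext fun y => clm_apply_expand _ ξ
  rw [hfun]
  have H : HasFDerivAt (fun y => ∑ j, ξ j * (fderiv ℝ u y (EuclideanSpace.single j 1)))
      (∑ j, ξ j • fderiv ℝ (fun y => fderiv ℝ u y (EuclideanSpace.single j 1)) x₀) x₀ :=
    HasFDerivAt.fun_sum (fun j _ => ((hdiffj j).hasFDerivAt).const_mul (ξ j))
  rw [H.fderiv]
  simp only [ContinuousLinearMap.coe_sum', Finset.sum_apply, ContinuousLinearMap.coe_smul',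
    Pi.smul_apply, smul_eq_mul]
  rw [Finset.sum_comm]
  refine Finset.sum_congr rfl (fun j _ => ?_)
  rw [clm_apply_expand _ ξ, Finset.mul_sum]
  refine Finset.sum_congr rfl (fun i _ => ?_)
  unfold phess
  ring

lemma fderiv_u_V_expand {n : ℕ} (u : En n → ℝ) (x₀ : En n) (ξ : Fin n → ℝ) :
    fderiv ℝ u x₀ (∑ j, ξ j • EuclideanSpace.single j (1:ℝ)) = ∑ j, ξ j * pgrad u x₀ j :=
  clm_apply_expand _ ξ

lemma gam_symm {n : ℕ} (u : En n → ℝ) (x : En n) (a b : Fin n) :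
    gam u x a b = gam u x b a := by
  unfold gam
  by_cases h : a = b
  · subst h; rfl
  · rw [if_neg h, if_neg (Ne.symm h), mul_comm (pgrad u x a) (pgrad u x b)]

lemma curvMat_quad_bound {n : ℕ} {u : En n → ℝ} {x₀ : En n} {σ δ r₀ : ℝ}
    (hδ : 0 < δ) (hr₀ : 0 < r₀) (ht : 0 ≤ u x₀)
    (hsum : δ + u x₀ = σ * r₀)
    (hwδ : wgt u x₀ * δ = r₀)
    (KEY : ∀ ξ : Fin n → ℝ, δ * (∑ i, ∑ j, ξ i * ξ j * phess u x₀ i j)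
      ≤ (∑ i, (ξ i)^2) + (∑ i, pgrad u x₀ i * ξ i)^2)
    (ζ : Fin n → ℝ) :
    ∑ i, ∑ j, ζ i * ζ j * curvMat u x₀ i j ≤ σ * ∑ i, (ζ i)^2 := by
  set w := wgt u x₀ with hwdef
  set p := pgrad u x₀ with hpdef
  have hwpos : 0 < w := by
    rw [hwdef]; unfold wgt; rw [← hpdef]
    have : (0:ℝ) < 1 + ∑ i, p i ^ 2 := by positivity
    positivity
  have hw2 : w^2 = 1 + ∑ i, p i ^ 2 := by
    rw [hwdef]; unfold wgt; rw [← hpdef]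
    exact Real.sq_sqrt (by positivity)
  set s := ∑ i, p i * ζ i with hsdef
  set η : Fin n → ℝ := fun k => ∑ i, ζ i * gam u x₀ i k with hηdef
  have hηk : ∀ k, η k = ζ k - p k * s / (w * (1 + w)) := by
    intro k
    rw [hηdef]
    simp only [gam, ← hwdef, ← hpdef]
    rw [Finset.sum_congr rfl (fun i _ => by rw [mul_sub, mul_ite, mul_one, mul_zero]; ring :
      ∀ i ∈ Finset.univ, ζ i * ((if i = k then (1:ℝ) else 0) - p i * p k / (w * (1 + w)))
        = (if i = k then ζ i else 0) - (p i * ζ i) * (p k / (w * (1 + w))))]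
    rw [Finset.sum_sub_distrib, Finset.sum_ite_eq' Finset.univ k ζ, ← Finset.sum_mul]
    simp only [Finset.mem_univ, if_true, ← hsdef]
    ring
  have hfac : (0:ℝ) < w * (1 + w) := by nlinarith
  have hq : ∑ i, p i ^ 2 = w^2 - 1 := by linarith
  -- Γ(I+ppᵀ)Γ = I identity
  have hgid : (∑ k, (η k)^2) + (∑ k, p k * η k)^2 = ∑ i, (ζ i)^2 := by
    have h1 : ∑ k, (η k)^2
        = (∑ k, (ζ k)^2) - (∑ k, p k * ζ k) * (2 * s / (w * (1+w)))
          + (w^2 - 1) * (s / (w * (1+w)))^2 := by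
      rw [Finset.sum_congr rfl (fun k _ => by rw [hηk k]; ring :
        ∀ k ∈ Finset.univ, (η k)^2
          = ((ζ k)^2 - (p k * ζ k) * (2 * s / (w * (1+w)))) + (p k)^2 * (s / (w * (1+w)))^2)]
      rw [Finset.sum_add_distrib, Finset.sum_sub_distrib, ← Finset.sum_mul, ← Finset.sum_mul, hq]
    have h2 : ∑ k, p k * η k = s - (w^2-1) * (s / (w * (1+w))) := by
      rw [Finset.sum_congr rfl (fun k _ => by rw [hηk k]; ring :
        ∀ k ∈ Finset.univ, p k * η k = p k * ζ k - (p k)^2 * (s / (w * (1+w))))]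
      rw [Finset.sum_sub_distrib, ← Finset.sum_mul, hq, ← hsdef]
    rw [h1, h2, ← hsdef]
    have hwne : w ≠ 0 := ne_of_gt hwpos
    have hw1ne : w * (1 + w) ≠ 0 := ne_of_gt hfac
    field_simp
    ring
  set Z := ∑ i, (ζ i)^2 with hZdef
  have hZnn : 0 ≤ Z := Finset.sum_nonneg (fun i _ => sq_nonneg _)
  set S := ∑ k, ∑ l, η k * η l * phess u x₀ k l with hSdef
  have hδS : δ * S ≤ Z := by
    have := KEY η
    rw [← hSdef] at this
    calc δ * S ≤ (∑ i, (η i)^2) + (∑ i, p i * η i)^2 := this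
      _ = Z := hgid
  -- rewrite the quadratic form
  have hdiag : ∑ i, ∑ j, ζ i * ζ j * (if i = j then (1:ℝ) else 0) = Z := by
    refine Finset.sum_congr rfl (fun i _ => ?_)
    rw [Finset.sum_congr rfl (fun j _ => by rw [mul_ite, mul_one, mul_zero] :
      ∀ j ∈ Finset.univ, ζ i * ζ j * (if i = j then (1:ℝ) else 0)
        = if i = j then ζ i * ζ j else 0)]
    rw [Finset.sum_ite_eq Finset.univ i (fun j => ζ i * ζ j)]
    simp [sq]
  have hT : ∑ i, ∑ j, ζ i * ζ j * (∑ k, ∑ l, gam u x₀ i k * phess u x₀ k l * gam u x₀ l j)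
      = S := by
    have step1 : ∀ i j : Fin n,
        ζ i * ζ j * (∑ k, ∑ l, gam u x₀ i k * phess u x₀ k l * gam u x₀ l j)
        = ∑ k, ∑ l, (ζ i * gam u x₀ i k) * ((ζ j * gam u x₀ j l) * phess u x₀ k l) := by
      intro i j
      rw [Finset.mul_sum]
      refine Finset.sum_congr rfl (fun k _ => ?_)
      rw [Finset.mul_sum]
      refine Finset.sum_congr rfl (fun l _ => ?_)
      rw [gam_symm u x₀ l j]
      ring
    have step2 : S = ∑ k, ∑ l, ∑ i, ∑ j,
        (ζ i * gam u x₀ i k) * ((ζ j * gam u x₀ j l) * phess u x₀ k l) := by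
      rw [hSdef]
      refine Finset.sum_congr rfl (fun k _ => Finset.sum_congr rfl (fun l _ => ?_))
      rw [hηdef]
      simp only
      rw [Finset.sum_mul, Finset.sum_mul]
      refine Finset.sum_congr rfl (fun i _ => ?_)
      rw [Finset.mul_sum, Finset.sum_mul]
      refine Finset.sum_congr rfl (fun j _ => ?_)
      ring
    simp only [step1]
    rw [step2]
    calc ∑ i, ∑ j, ∑ k, ∑ l, (ζ i * gam u x₀ i k) * ((ζ j * gam u x₀ j l) * phess u x₀ k l)
        = ∑ i, ∑ k, ∑ j, ∑ l, (ζ i * gam u x₀ i k) * ((ζ j * gam u x₀ j l) * phess u x₀ k l) :=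
          Finset.sum_congr rfl (fun i _ => Finset.sum_comm)
      _ = ∑ i, ∑ k, ∑ l, ∑ j, (ζ i * gam u x₀ i k) * ((ζ j * gam u x₀ j l) * phess u x₀ k l) :=
          Finset.sum_congr rfl (fun i _ => Finset.sum_congr rfl (fun k _ => Finset.sum_comm))
      _ = ∑ k, ∑ i, ∑ l, ∑ j, (ζ i * gam u x₀ i k) * ((ζ j * gam u x₀ j l) * phess u x₀ k l) :=
          Finset.sum_comm
      _ = ∑ k, ∑ l, ∑ i, ∑ j, (ζ i * gam u x₀ i k) * ((ζ j * gam u x₀ j l) * phess u x₀ k l) :=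
          Finset.sum_congr rfl (fun k _ => Finset.sum_comm)
  have hquad : ∑ i, ∑ j, ζ i * ζ j * curvMat u x₀ i j = (1/w) * (Z + u x₀ * S) := by
    have e1 : ∀ i j : Fin n, ζ i * ζ j * curvMat u x₀ i j
        = (1/w) * (ζ i * ζ j * (if i = j then (1:ℝ) else 0))
          + ((1/w) * u x₀) * (ζ i * ζ j
              * (∑ k, ∑ l, gam u x₀ i k * phess u x₀ k l * gam u x₀ l j)) := by
      intro i j
      show ζ i * ζ j * ((1 / wgt u x₀) * _) = _
      rw [← hwdef]
      ring
    simp only [e1, Finset.sum_add_distrib, ← Finset.mul_sum]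
    rw [hdiag, hT]
    ring
  rw [hquad]
  have hσw : σ * (w * δ) = δ + u x₀ := by rw [hwδ]; linarith
  have h2 : σ * Z * w * δ = Z * (δ + u x₀) := by rw [← hσw]; ring
  have h1 : u x₀ * S * δ ≤ u x₀ * Z := by nlinarith
  rw [show (1/w) * (Z + u x₀ * S) = (Z + u x₀ * S)/w by ring, div_le_iff₀ hwpos]
  nlinarith [h1, h2, hδ]

open Polynomial Matrix in
lemma charpoly_conj {m : Type*} [Fintype m] [DecidableEq m] {R : Type*} [CommRing R]
    (U V D : Matrix m m R) (hUV : U * V = 1) (hVU : V * U = 1) :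
    (U * D * V).charpoly = D.charpoly := by
  unfold Matrix.charpoly
  have hC : ∀ M N : Matrix m m R, (M * N).map (C : R →+* R[X]) = M.map C * N.map C :=
    fun M N => Matrix.map_mul
  have hscal : ∀ M : Matrix m m R[X],
      M * Matrix.scalar m (X : R[X]) = Matrix.scalar m (X : R[X]) * M :=
    fun M => (Matrix.scalar_commute (X : R[X]) (fun r' => Commute.all _ _) M).symm
  have hch : Matrix.charmatrix (U * D * V)
      = U.map C * Matrix.charmatrix D * V.map C := by
    unfold Matrix.charmatrix
    simp only [RingHom.mapMatrix_apply]
    rw [Matrix.mul_sub, Matrix.sub_mul, hC, hC]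
    congr 1
    rw [hscal (U.map C), Matrix.mul_assoc, ← hC, hUV]
    simp
  rw [hch, Matrix.det_mul, Matrix.det_mul]
  have : U.map C * V.map C = 1 := by rw [← hC, hUV]; simp
  have hdet : (U.map C).det * (V.map C).det = 1 := by
    rw [← Matrix.det_mul, this, Matrix.det_one]
  calc (U.map C).det * (Matrix.charmatrix D).det * (V.map C).det
      = (Matrix.charmatrix D).det * ((U.map C).det * (V.map C).det) := by ring
    _ = (Matrix.charmatrix D).det := by rw [hdet, mul_one]

open Polynomial Matrix in
lemma charpoly_diagonal {m : Type*} [Fintype m] [DecidableEq m] {R : Type*} [CommRing R]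
    (d : m → R) : (Matrix.diagonal d).charpoly = ∏ i, (X - C (d i)) := by
  unfold Matrix.charpoly
  have : Matrix.charmatrix (Matrix.diagonal d) = Matrix.diagonal (fun i => X - C (d i)) := by
    ext i j
    by_cases h : i = j
    · subst h
      rw [Matrix.charmatrix_apply_eq, Matrix.diagonal_apply_eq, Matrix.diagonal_apply_eq]
    · rw [Matrix.charmatrix_apply_ne _ _ _ h, Matrix.diagonal_apply_ne _ h,
        Matrix.diagonal_apply_ne _ h]
      simp
  rw [this, Matrix.det_diagonal]

lemma multiset_prod_le_pow {σ : ℝ} (hσ : 0 ≤ σ) (t : Multiset ℝ)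
    (h : ∀ x ∈ t, 0 ≤ x ∧ x ≤ σ) : t.prod ≤ σ ^ (Multiset.card t) := by
  induction t using Multiset.induction_on with
  | empty => simp
  | cons a tl ih =>
    rw [Multiset.prod_cons, Multiset.card_cons, pow_succ]
    have ha := h a (Multiset.mem_cons_self a tl)
    have hprodnn : 0 ≤ tl.prod :=
      Multiset.prod_nonneg (fun x hx => (h x (Multiset.mem_cons_of_mem hx)).1)
    have := ih (fun x hx => h x (Multiset.mem_cons_of_mem hx))
    calc a * tl.prod ≤ σ * tl.prod := mul_le_mul_of_nonneg_right ha.2 hprodnn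
      _ ≤ σ * σ ^ Multiset.card tl := mul_le_mul_of_nonneg_left this hσ
      _ = σ ^ Multiset.card tl * σ := mul_comm _ _

lemma multiset_sum_le {a : ℝ} (s : Multiset ℝ) (h : ∀ x ∈ s, x ≤ a) :
    s.sum ≤ (Multiset.card s) * a := by
  induction s using Multiset.induction_on with
  | empty => simp
  | cons b tl ih =>
    rw [Multiset.sum_cons, Multiset.card_cons]
    have := ih (fun x hx => h x (Multiset.mem_cons_of_mem hx))
    have hb := h b (Multiset.mem_cons_self b tl)
    push_cast
    nlinarith [this, hb]

open Polynomial Matrix in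
lemma sigmaElem_le {n k : ℕ} (hkn : k ≤ n) {σ : ℝ} (hσ : 0 < σ)
    {A : Matrix (Fin n) (Fin n) ℝ} (hA : A.PosDef)
    (hQ : ∀ ζ : Fin n → ℝ, ∑ i, ∑ j, ζ i * ζ j * A i j ≤ σ * ∑ i, (ζ i)^2) :
    sigmaElem k A ≤ (n.choose k : ℝ) * σ^k := by
  have hH : A.IsHermitian := hA.1
  set μ := hH.eigenvalues with hμdef
  have hμpos : ∀ i, 0 < μ i := hA.eigenvalues_pos
  have hμle : ∀ i, μ i ≤ σ := by
    intro i
    set ζ : Fin n → ℝ := ⇑(hH.eigenvectorBasis i) with hζdef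
    have hmul : A *ᵥ ζ = μ i • ζ := hH.mulVec_eigenvectorBasis i
    have hnorm : ‖hH.eigenvectorBasis i‖ = 1 := hH.eigenvectorBasis.orthonormal.1 i
    have hsq : ∑ a, (ζ a)^2 = 1 := by
      have := congrArg (fun r : ℝ => r^2) hnorm
      simp only [one_pow] at this
      rw [EuclideanSpace.norm_eq] at this
      rw [Real.sq_sqrt (Finset.sum_nonneg (fun a _ => by positivity))] at this
      simpa [sq_abs] using this
    have hform : ∑ a, ∑ b, ζ a * ζ b * A a b = μ i * ∑ a, (ζ a)^2 := by
      rw [Finset.mul_sum]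
      rw [Finset.sum_congr rfl (fun a _ => ?_)]
      have hva : (A *ᵥ ζ) a = μ i * ζ a := by rw [hmul]; simp
      have : ∑ b, ζ a * ζ b * A a b = ζ a * (A *ᵥ ζ) a := by
        rw [Matrix.mulVec, dotProduct, Finset.mul_sum]
        exact Finset.sum_congr rfl (fun b _ => by ring)
      rw [this, hva]
      ring
    have := hQ ζ
    rw [hform, hsq] at this
    simpa using this
  have hUV : (hH.eigenvectorUnitary : Matrix (Fin n) (Fin n) ℝ)
      * star (hH.eigenvectorUnitary : Matrix (Fin n) (Fin n) ℝ) = 1 :=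
    Matrix.mem_unitaryGroup_iff.mp (Matrix.IsHermitian.eigenvectorUnitary hH).2
  have hVU : star (hH.eigenvectorUnitary : Matrix (Fin n) (Fin n) ℝ)
      * (hH.eigenvectorUnitary : Matrix (Fin n) (Fin n) ℝ) = 1 :=
    Matrix.mem_unitaryGroup_iff'.mp (Matrix.IsHermitian.eigenvectorUnitary hH).2
  have hdiagval : (RCLike.ofReal ∘ μ : Fin n → ℝ) = μ := funext fun i => rfl
  have hcp : A.charpoly = ∏ i, (X - C (μ i)) := by
    conv_lhs => rw [hH.spectral_theorem, Unitary.conjStarAlgAut_apply]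
    rw [charpoly_conj _ _ _ hUV hVU, hdiagval, _root_.charpoly_diagonal]
  set sM : Multiset ℝ := Finset.univ.val.map μ with hsMdef
  have hcard : Multiset.card sM = n := by
    rw [hsMdef, Multiset.card_map]
    simp
  have hprod : ∏ i, (X - C (μ i)) = (sM.map (fun r => X - C r)).prod := by
    rw [hsMdef, Multiset.map_map]
    rfl
  have hnk : n - k ≤ Multiset.card sM := by rw [hcard]; omega
  have hcoeff := Multiset.prod_X_sub_C_coeff sM hnk
  rw [hcard, Nat.sub_sub_self hkn] at hcoeff
  unfold sigmaElem
  rw [hcp, hprod, hcoeff, ← mul_assoc, ← mul_pow, neg_mul_neg, one_mul, one_pow, one_mul]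
  unfold Multiset.esymm
  have hmem : ∀ x ∈ (sM.powersetCard k).map Multiset.prod, x ≤ σ^k := by
    intro x hx
    obtain ⟨t, ht, rfl⟩ := Multiset.mem_map.mp hx
    obtain ⟨htle, htcard⟩ := (Multiset.mem_powersetCard).mp ht
    have hbnd : ∀ y ∈ t, 0 ≤ y ∧ y ≤ σ := by
      intro y hy
      have : y ∈ sM := Multiset.mem_of_le htle hy
      obtain ⟨i, _, rfl⟩ := Multiset.mem_map.mp this
      exact ⟨(hμpos i).le, hμle i⟩
    have := multiset_prod_le_pow hσ.le t hbnd
    rwa [htcard] at this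
  have hsum := multiset_sum_le _ hmem
  rw [Multiset.card_map, Multiset.card_powersetCard, hcard] at hsum
  exact hsum

lemma subgraph_compact {n : ℕ} {Ω : Set (En n)} (hb : Bornology.IsBounded Ω)
    {u : En n → ℝ} (hucont : ContinuousOn u (closure Ω))
    (hpos : ∀ x ∈ closure Ω, 0 ≤ u x) :
    IsCompact {q : En n × ℝ | q.1 ∈ closure Ω ∧ 0 ≤ q.2 ∧ q.2 ≤ u q.1} := by
  set f : En n × ℝ → En n × ℝ := fun p => (p.1, p.2 * u p.1) with hfdef
  set Kset : Set (En n × ℝ) := (closure Ω) ×ˢ (Icc (0:ℝ) 1) with hKdef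
  have hK : IsCompact Kset :=
    (Metric.isCompact_of_isClosed_isBounded isClosed_closure hb.closure).prod isCompact_Icc
  have hf : ContinuousOn f Kset := by
    apply ContinuousOn.prodMk
    · exact continuous_fst.continuousOn
    · exact (continuous_snd.continuousOn).mul
        (hucont.comp continuous_fst.continuousOn (fun p hp => hp.1))
  have himg : f '' Kset = {q : En n × ℝ | q.1 ∈ closure Ω ∧ 0 ≤ q.2 ∧ q.2 ≤ u q.1} := by
    ext ⟨x, t⟩
    constructor
    · rintro ⟨⟨y, s⟩, ⟨hy, hs⟩, heq⟩
      obtain ⟨h1, h2⟩ := Prod.ext_iff.mp heq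
      simp only at h1 h2
      subst h1
      subst h2
      exact ⟨hy, mul_nonneg hs.1 (hpos _ hy), mul_le_of_le_one_left (hpos _ hy) hs.2⟩
    · rintro ⟨hx, ht0, htu⟩
      rcases eq_or_lt_of_le (hpos x hx) with h0 | hpos'
      · refine ⟨(x, 0), ⟨hx, by norm_num⟩, ?_⟩
        have : t = 0 := le_antisymm (by rw [← h0] at htu; exact htu) ht0
        simp [hfdef, this]
      · refine ⟨(x, t / u x), ⟨hx, ⟨by positivity, (div_le_one hpos').mpr htu⟩⟩, ?_⟩
        simp only [hfdef]
        rw [div_mul_cancel₀ _ (ne_of_gt hpos')]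
  rw [← himg]
  exact hK.image_of_continuousOn hf

set_option maxHeartbeats 1000000 in
/-- Lemma: spherical barrier: a strictly locally convex graph with
`σ_k(κ) > σ_k(σ,…,σ)` and boundary at height `c` avoids the ball `B_R((b', σR))` whenever the
ball avoids `Ω̄ × {c}`, `b' ∉ Ω̄` and `dist(b', ∂Ω) > c/σ`. -/
theorem statement5 {n : ℕ} (k : ℕ) (hk1 : 1 ≤ k) (hkn : k ≤ n)
    (σ c : ℝ) (hσ : σ ∈ Set.Ioo (0:ℝ) 1) (hc : 0 ≤ c)
    (Ω : Set (En n)) (hΩo : IsOpen Ω) (hΩb : Bornology.IsBounded Ω)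
    (u : En n → ℝ)
    (hu : ContDiffOn ℝ 2 u Ω) (hupos : ∀ x ∈ Ω, 0 < u x)
    (hucont : ContinuousOn u (closure Ω))
    (huconv : ∀ x ∈ Ω, (curvMat u x).PosDef)
    (hcurv : ∀ x ∈ Ω, (n.choose k : ℝ) * σ ^ k < sigmaElem k (curvMat u x))
    (hbdry : ∀ x ∈ frontier Ω, u x = c)
    (R : ℝ) (hR : 0 < R) (b' : En n)
    (hb1 : b' ∉ closure Ω)
    (hb2 : c / σ < Metric.infDist b' (frontier Ω))
    (hdisj : ∀ x ∈ closure Ω, ¬ inBallH b' (σ * R) R x c) :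
    ∀ x ∈ Ω, ¬ inBallH b' (σ * R) R x (u x) := by
  intro x hx hball
  have hσ0 : 0 < σ := hσ.1
  have hσ1 : σ < 1 := hσ.2
  have hcl_cases : ∀ y ∈ closure Ω, y ∈ Ω ∨ y ∈ frontier Ω := by
    intro y hy
    by_cases hyΩ : y ∈ Ω
    · exact Or.inl hyΩ
    · exact Or.inr ⟨hy, by rwa [hΩo.interior_eq]⟩
  have hu0cl : ∀ y ∈ closure Ω, 0 ≤ u y := by
    intro y hy
    rcases hcl_cases y hy with h | h
    · exact (hupos y h).le
    · rw [hbdry y h]; exact hc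
  set K := {q : En n × ℝ | q.1 ∈ closure Ω ∧ 0 ≤ q.2 ∧ q.2 ≤ u q.1} with hKdef
  have hKcpt : IsCompact K := subgraph_compact hΩb hucont hu0cl
  have hxK : ((x, u x) : En n × ℝ) ∈ K := ⟨subset_closure hx, (hupos x hx).le, le_refl _⟩
  obtain ⟨q₀, hq₀K, hq₀min'⟩ := hKcpt.exists_isMinOn ⟨_, hxK⟩
    ((sphRad_continuous σ b' hσ1 hσ0).continuousOn)
  have hq₀min := isMinOn_iff.mp hq₀min'
  obtain ⟨x₀, t₀⟩ := q₀
  have hx₀cl : x₀ ∈ closure Ω := hq₀K.1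
  have ht₀0 : 0 ≤ t₀ := hq₀K.2.1
  have ht₀u : t₀ ≤ u x₀ := hq₀K.2.2
  set r₀ := sphRad σ b' x₀ t₀ with hr₀def
  have hx₀ne : x₀ ≠ b' := fun h => hb1 (h ▸ hx₀cl)
  have hr₀pos : 0 < r₀ := sphRad_pos hσ0 hσ1 ht₀0 hx₀ne
  have hminT : ∀ q ∈ K, r₀ ≤ sphRad σ b' q.1 q.2 := fun q hq => hq₀min q hq
  have hr₀R : r₀ < R := by
    have h1 : sphRad σ b' x (u x) < R :=
      (sphRad_lt_iff hσ0 hσ1 b' x (hupos x hx).le hR).mpr hball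
    exact lt_of_le_of_lt (hminT _ hxK) h1
  have hsph : dist x₀ b' ^2 + (t₀ - σ*r₀)^2 = r₀^2 :=
    sphRad_eq_sphere hσ0 hσ1 b' x₀ ht₀0 hr₀pos hr₀def.symm
  have hout : ∀ q ∈ K, r₀^2 ≤ dist q.1 b' ^2 + (q.2 - σ*r₀)^2 := by
    intro q hq
    by_contra hlt
    push_neg at hlt
    exact absurd ((sphRad_lt_iff hσ0 hσ1 b' q.1 hq.2.1 hr₀pos).mpr hlt)
      (not_lt.mpr (hminT q hq))
  rcases hcl_cases x₀ hx₀cl with hx₀Ω | hx₀fr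
  · -- interior contact
    rcases lt_or_eq_of_le ht₀u with h2b | heq
    · -- below the graph: horizontal slice gives x₀ = b'
      have hΦmin : IsLocalMin (fun y : En n => ∑ i, (y i - b' i)^2) x₀ := by
        have hev : ∀ᶠ y in nhds x₀, (∑ i, (x₀ i - b' i)^2) ≤ ∑ i, (y i - b' i)^2 := by
          have huCA : ContinuousAt u x₀ := hu.continuousOn.continuousAt (hΩo.mem_nhds hx₀Ω)
          have hset : u ⁻¹' (Set.Ioi t₀) ∈ nhds x₀ := huCA (Ioi_mem_nhds h2b)
          filter_upwards [hΩo.mem_nhds hx₀Ω, hset] with y hyΩ hyt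
          have hyK : ((y, t₀) : En n × ℝ) ∈ K := ⟨subset_closure hyΩ, ht₀0, le_of_lt hyt⟩
          have h1 := hout _ hyK
          rw [dist_sq_eq_sum] at h1
          have h2 : (∑ i, (x₀ i - b' i)^2) + (t₀ - σ*r₀)^2 = r₀^2 := by
            rw [← dist_sq_eq_sum]; exact hsph
          simp only at h1
          linarith
        exact hev
      exact hb1 ((eventually_min_coord hΦmin) ▸ hx₀cl)
    · -- contact on the graph
      have ht₀pos : 0 < t₀ := by rw [heq]; exact hupos x₀ hx₀Ω
      have ht₀σr : t₀ ≤ σ * r₀ := by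
        by_contra hgt
        push_neg at hgt
        have hK' : ((x₀, σ*r₀) : En n × ℝ) ∈ K :=
          ⟨hx₀cl, by positivity, le_of_lt (heq ▸ hgt)⟩
        have h1 := hout _ hK'
        simp only [sub_self] at h1
        have hne : 0 < (t₀ - σ*r₀)^2 := by
          have hne0 : t₀ - σ*r₀ ≠ 0 := sub_ne_zero.mpr (ne_of_gt hgt)
          positivity
        nlinarith [hsph, h1, hne]
      set δ := σ * r₀ - t₀ with hδdef
      have hδ0 : 0 ≤ δ := by rw [hδdef]; linarith
      set G := fun y : En n => (∑ i, (y i - b' i)^2) + (u y - σ*r₀)^2 with hGdef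
      have hGx₀ : G x₀ = r₀^2 := by
        rw [hGdef]
        simp only
        rw [← dist_sq_eq_sum, ← heq]
        exact hsph
      have hGmin : IsLocalMin G x₀ := by
        have hev : ∀ᶠ y in nhds x₀, G x₀ ≤ G y := by
          filter_upwards [hΩo.mem_nhds hx₀Ω] with y hyΩ
          have hyK : ((y, u y) : En n × ℝ) ∈ K :=
            ⟨subset_closure hyΩ, (hupos y hyΩ).le, le_refl _⟩
          have h1 := hout _ hyK
          rw [dist_sq_eq_sum] at h1
          rw [hGx₀, hGdef]
          simp only at h1 ⊢
          linarith
        exact hev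
      have hudiff : DifferentiableAt ℝ u x₀ :=
        (hu.differentiableOn (by norm_num)).differentiableAt (hΩo.mem_nhds hx₀Ω)
      have hgrad0 : fderiv ℝ G x₀ = 0 := hGmin.fderiv_eq_zero
      have hcoord : ∀ j, x₀ j - b' j = δ * pgrad u x₀ j := by
        intro j
        have h1 := fderiv_G_coord b' (σ*r₀) hudiff j
        rw [← hGdef, hgrad0] at h1
        rw [ContinuousLinearMap.zero_apply] at h1
        rw [hδdef, heq]
        linear_combination (-(1:ℝ)/2) * h1
      have hδpos : 0 < δ := by
        rcases lt_or_eq_of_le hδ0 with h | h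
        · exact h
        · exfalso
          apply hb1
          have hxb : x₀ = b' := by
            ext j
            have h2 := hcoord j
            rw [← h, zero_mul, sub_eq_zero] at h2
            exact h2
          exact hxb ▸ hx₀cl
      have hw2 : wgt u x₀ ^2 = 1 + ∑ i, pgrad u x₀ i^2 := by
        unfold wgt
        exact Real.sq_sqrt (by positivity)
      have hwnn : 0 ≤ wgt u x₀ := Real.sqrt_nonneg _
      have hsph2 : δ^2 * (1 + ∑ i, pgrad u x₀ i^2) = r₀^2 := by
        have h1 : ∑ i, (x₀ i - b' i)^2 = δ^2 * ∑ i, pgrad u x₀ i^2 := by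
          rw [Finset.mul_sum]
          exact Finset.sum_congr rfl (fun i _ => by rw [hcoord i]; ring)
        have h2 : dist x₀ b'^2 = ∑ i, (x₀ i - b' i)^2 := dist_sq_eq_sum _ _
        have h3 : (t₀ - σ*r₀)^2 = δ^2 := by rw [hδdef]; ring
        calc δ^2 * (1 + ∑ i, pgrad u x₀ i^2) = δ^2 + δ^2 * ∑ i, pgrad u x₀ i^2 := by ring
          _ = (t₀ - σ*r₀)^2 + ∑ i, (x₀ i - b' i)^2 := by rw [h3, h1]
          _ = r₀^2 := by rw [← h2]; linarith [hsph]
      have hwδ : wgt u x₀ * δ = r₀ := by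
        have h1 : (wgt u x₀ * δ)^2 = r₀^2 := by
          rw [mul_pow, hw2]
          linear_combination hsph2
        have h2 : (wgt u x₀ * δ - r₀) * (wgt u x₀ * δ + r₀) = 0 := by linear_combination h1
        rcases mul_eq_zero.mp h2 with h3 | h3
        · linarith [sub_eq_zero.mp h3]
        · exfalso
          have := mul_nonneg hwnn hδpos.le
          linarith
      have hGsmooth : ContDiffOn ℝ 2 G Ω := by
        rw [hGdef]
        apply ContDiffOn.add
        · apply ContDiff.contDiffOn
          apply ContDiff.sum
          intro i _
          exact (((EuclideanSpace.proj (𝕜 := ℝ) i).contDiff).sub contDiff_const).pow 2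
        · exact (hu.sub contDiffOn_const).pow 2
      have KEY : ∀ ξ : Fin n → ℝ, δ * (∑ i, ∑ j, ξ i * ξ j * phess u x₀ i j)
          ≤ (∑ i, (ξ i)^2) + (∑ i, pgrad u x₀ i * ξ i)^2 := by
        intro ξ
        set V : En n := ∑ j, ξ j • EuclideanSpace.single j (1:ℝ) with hVdef
        have h2nd := second_deriv_nonneg_of_isLocalMin hΩo hx₀Ω hGsmooth hGmin V
        rw [hGdef] at h2nd
        have hval := fderiv_fderiv_G b' (σ*r₀) hΩo hu hx₀Ω V
        rw [hval] at h2nd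
        have hVi : ∀ i, V i = ξ i := fun i => by rw [hVdef]; exact V_apply ξ i
        have hsumV : ∑ i, (V i)^2 = ∑ i, (ξ i)^2 :=
          Finset.sum_congr rfl (fun i _ => by rw [hVi i])
        have hDuV : fderiv ℝ u x₀ V = ∑ i, pgrad u x₀ i * ξ i := by
          rw [hVdef, fderiv_u_V_expand]
          exact Finset.sum_congr rfl (fun i _ => mul_comm _ _)
        have hQ2 : fderiv ℝ (fun y => fderiv ℝ u y V) x₀ V
            = ∑ i, ∑ j, ξ i * ξ j * phess u x₀ i j := by
          rw [hVdef]
          exact snd_expand hΩo hu hx₀Ω ξ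
        rw [hsumV, hDuV, hQ2] at h2nd
        have hneg : u x₀ - σ*r₀ = -δ := by rw [hδdef, ← heq]; ring
        rw [hneg] at h2nd
        nlinarith [h2nd]
      have hsum : δ + u x₀ = σ * r₀ := by rw [hδdef, ← heq]; ring
      have hquad := fun ζ => curvMat_quad_bound hδpos hr₀pos
        (by rw [← heq]; exact ht₀pos.le) hsum hwδ KEY ζ
      have hsig := sigmaElem_le hkn hσ0 (huconv x₀ hx₀Ω) hquad
      have hstrict := hcurv x₀ hx₀Ω
      linarith
  · -- boundary contact is impossible
    have hux₀ : u x₀ = c := hbdry x₀ hx₀fr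
    have ht₀c : t₀ ≤ c := hux₀ ▸ ht₀u
    have hdb : c/σ < dist x₀ b' := by
      have h1 : Metric.infDist b' (frontier Ω) ≤ dist b' x₀ :=
        Metric.infDist_le_dist_of_mem hx₀fr
      rw [dist_comm] at h1
      linarith
    have hd_le : dist x₀ b' ≤ r₀ := by
      nlinarith [hsph, sq_nonneg (t₀ - σ*r₀), dist_nonneg (x := x₀) (y := b'), hr₀pos]
    have hcσr : c < σ * r₀ := by
      have h1 : c/σ < r₀ := lt_of_lt_of_le hdb hd_le
      calc c = σ * (c/σ) := by field_simp
        _ < σ * r₀ := by exact mul_lt_mul_of_pos_left h1 hσ0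
    have hsq2 : (c - σ*r₀)^2 ≤ (t₀ - σ*r₀)^2 := by nlinarith
    have hcball : dist x₀ b'^2 + (c - σ*r₀)^2 ≤ r₀^2 := by linarith [hsph]
    have hTc : sphRad σ b' x₀ c ≤ r₀ :=
      (sphRad_le_iff hσ0 hσ1 b' x₀ hc hr₀pos).mpr hcball
    have hTcR : sphRad σ b' x₀ c < R := lt_of_le_of_lt hTc hr₀R
    have hin : dist x₀ b'^2 + (c - σ*R)^2 < R^2 :=
      (sphRad_lt_iff hσ0 hσ1 b' x₀ hc hR).mp hTcR
    exact hdisj x₀ hx₀cl hin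
end
end

section
/- Fix x₀ ∈ ℝⁿ, a positive C² function u defined near x₀ with A(D²u(x₀), Du(x₀), u(x₀)) positive definite, and ψ(x₀) > 0. Define Φ(t) = σ_k^{1/k}( λ( A(D²u(x₀), Du(x₀), t) ) ) for t > 0 near u(x₀). If Φ(u(x₀)) = ψ(x₀)·u(x₀), then Φ'(u(x₀)) < ψ(x₀). -/
open scoped BigOperators
open Metric Set

noncomputable section

/-- The matrix `A(r,p,t) = (1/w)(I + t·γ r γ)` with `w = √(1+|p|²)`,
`γ = I − p⊗p/(w(1+w))`. -/
def Amat {n : ℕ} (r : Matrix (Fin n) (Fin n) ℝ) (p : En n) (t : ℝ) :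
    Matrix (Fin n) (Fin n) ℝ :=
  (Real.sqrt (1 + ∑ i, p i ^ 2))⁻¹ •
    ((1 : Matrix (Fin n) (Fin n) ℝ) + t •
      ((Matrix.of fun i j => (if i = j then (1:ℝ) else 0) -
          p i * p j / (Real.sqrt (1 + ∑ i, p i ^ 2) * (1 + Real.sqrt (1 + ∑ i, p i ^ 2)))) *
        r *
        (Matrix.of fun i j => (if i = j then (1:ℝ) else 0) -
          p i * p j / (Real.sqrt (1 + ∑ i, p i ^ 2) * (1 + Real.sqrt (1 + ∑ i, p i ^ 2))))))

section aux
open Polynomial Matrix Finset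

lemma my_charpoly_conj {n : ℕ} (U V B : Matrix (Fin n) (Fin n) ℝ) (hUV : U * V = 1) :
    (U * B * V).charpoly = B.charpoly := by
  have hc : charmatrix (U * B * V) =
      (C : ℝ →+* ℝ[X]).mapMatrix U * charmatrix B * (C : ℝ →+* ℝ[X]).mapMatrix V := by
    unfold Matrix.charmatrix
    rw [Matrix.mul_sub, Matrix.sub_mul]
    congr 1
    · have hcomm : Commute (Matrix.scalar (Fin n) (X : ℝ[X]))
          ((C : ℝ →+* ℝ[X]).mapMatrix U) := by
        apply Matrix.scalar_commute
        intro r; exact Commute.all _ _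
      rw [← hcomm.eq, mul_assoc, ← _root_.map_mul _ _ _, hUV, _root_.map_one _, mul_one]
    · rw [← _root_.map_mul _ _ _, ← _root_.map_mul _ _ _]
  have hdet : ((C : ℝ →+* ℝ[X]).mapMatrix U).det * ((C : ℝ →+* ℝ[X]).mapMatrix V).det = 1 := by
    rw [← Matrix.det_mul, ← _root_.map_mul _ _ _, hUV, _root_.map_one _, Matrix.det_one]
  unfold Matrix.charpoly
  rw [hc, Matrix.det_mul, Matrix.det_mul, mul_comm ((C : ℝ →+* ℝ[X]).mapMatrix U).det,
    mul_assoc, hdet, mul_one]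

lemma my_sigma_formula {n k : ℕ} (hkn : k ≤ n) {M : Matrix (Fin n) (Fin n) ℝ}
    (hM : M.IsHermitian) (c t : ℝ) :
    sigmaElem k (c • ((1 : Matrix (Fin n) (Fin n) ℝ) + t • M)) =
      ∑ S ∈ Finset.powersetCard k Finset.univ, ∏ i ∈ S, (c * (1 + t * hM.eigenvalues i)) := by
  set μ := hM.eigenvalues with hμ
  set U : Matrix (Fin n) (Fin n) ℝ := (hM.eigenvectorUnitary : Matrix (Fin n) (Fin n) ℝ) with hU
  have hU1 : U * star U = 1 := Matrix.mem_unitaryGroup_iff.mp hM.eigenvectorUnitary.2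
  set d : Fin n → ℝ := fun i => c * (1 + t * μ i) with hd
  have hofReal : (RCLike.ofReal : ℝ → ℝ) ∘ μ = μ := funext fun i => rfl
  have hspec : M = U * Matrix.diagonal μ * star U := by
    conv_lhs => rw [hM.spectral_theorem]
    rw [hofReal]
    rfl
  have hdiag : Matrix.diagonal d = c • (1 : Matrix (Fin n) (Fin n) ℝ) + (c*t) • Matrix.diagonal μ := by
    ext i j
    by_cases h : i = j <;> simp [Matrix.diagonal_apply, Matrix.one_apply, h, hd] <;> ring
  have hconj : c • ((1 : Matrix (Fin n) (Fin n) ℝ) + t • M) = U * Matrix.diagonal d * star U := by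
    rw [hdiag, Matrix.mul_add, Matrix.add_mul, Matrix.mul_smul, Matrix.smul_mul,
      Matrix.mul_smul, Matrix.smul_mul, Matrix.mul_one, hU1, ← hspec, smul_add, smul_smul]
  rw [hconj]
  unfold sigmaElem
  rw [my_charpoly_conj U (star U) _ hU1]
  have hcp : (Matrix.diagonal d).charpoly = ∏ i, (X - C (d i)) := by
    rw [Matrix.charpoly_of_upperTriangular _ (Matrix.blockTriangular_diagonal d)]
    simp [Matrix.diagonal_apply_eq]
  rw [hcp]
  have hprod : (∏ i, (X - C (d i))) = ((Finset.univ.val.map d).map fun r => X - C r).prod := by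
    rw [Multiset.map_map]; rfl
  have hcard : Multiset.card (Finset.univ.val.map d) = n := by
    simp [Multiset.card_map]
  rw [hprod, Multiset.prod_X_sub_C_coeff _ (by rw [hcard]; exact Nat.sub_le n k)]
  rw [hcard, Nat.sub_sub_self hkn, Finset.esymm_map_val, ← mul_assoc, ← mul_pow, neg_mul_neg,
    one_mul, one_pow, one_mul]

end aux

/-- Lemma 6.1: if `Φ(t) = σ_k^{1/k}(λ(A(D²u(x₀),Du(x₀),t)))` and
`Φ(u(x₀)) = ψ(x₀)·u(x₀)`, then `Φ'(u(x₀)) < ψ(x₀)`. -/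
theorem statement14 {n : ℕ} (k : ℕ) (hk1 : 1 ≤ k) (hkn : k ≤ n)
    (x₀ : En n) (u : En n → ℝ) (V : Set (En n)) (hV : V ∈ nhds x₀)
    (hu : ContDiffOn ℝ 2 u V) (hupos : 0 < u x₀)
    (ψ0 : ℝ) (hψ0 : 0 < ψ0)
    (hpd : (Amat (Matrix.of (phess u x₀)) (gradVec u x₀) (u x₀)).PosDef)
    (Φ : ℝ → ℝ)
    (hΦ : Φ = fun t =>
      (sigmaElem k (Amat (Matrix.of (phess u x₀)) (gradVec u x₀) t)) ^ ((k:ℝ)⁻¹))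
    (heq : Φ (u x₀) = ψ0 * u x₀) :
    deriv Φ (u x₀) < ψ0 := by
  classical
  set p : En n := gradVec u x₀ with hpdef
  set t₀ : ℝ := u x₀ with ht₀
  set w : ℝ := Real.sqrt (1 + ∑ i, p i ^ 2) with hwdef
  set γ : Matrix (Fin n) (Fin n) ℝ := Matrix.of fun i j => (if i = j then (1:ℝ) else 0) -
      p i * p j / (w * (1 + w)) with hγ
  set M : Matrix (Fin n) (Fin n) ℝ := γ * (Matrix.of (phess u x₀)) * γ with hMdef
  have hAmat : ∀ t : ℝ, Amat (Matrix.of (phess u x₀)) p t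
      = w⁻¹ • ((1 : Matrix (Fin n) (Fin n) ℝ) + t • M) := fun _ => rfl
  have hw0 : 0 < w := Real.sqrt_pos.2 (by positivity)
  -- M is Hermitian
  have hherm1 : ((w⁻¹ • ((1 : Matrix (Fin n) (Fin n) ℝ) + t₀ • M)) :
        Matrix (Fin n) (Fin n) ℝ).conjTranspose
      = w⁻¹ • ((1 : Matrix (Fin n) (Fin n) ℝ) + t₀ • M) := by
    rw [← hAmat]; exact hpd.1
  have hentry : ∀ i j, M j i = M i j := by
    intro i j
    have h := congrFun (congrFun hherm1 i) j
    simp only [Matrix.conjTranspose_apply, Matrix.smul_apply, Matrix.add_apply,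
      Matrix.one_apply, Matrix.smul_apply, smul_eq_mul, star_trivial] at h
    have hδ : (if i = j then (1:ℝ) else 0) = (if j = i then (1:ℝ) else 0) := by
      by_cases hij : i = j
      · simp [hij]
      · rw [if_neg hij, if_neg (fun h : j = i => hij h.symm)]
    have h2 : t₀ * M j i = t₀ * M i j := by
      have h3 := mul_left_cancel₀ (inv_ne_zero hw0.ne') h
      rw [hδ] at h3
      linarith
    exact mul_left_cancel₀ hupos.ne' h2
  have hM : M.IsHermitian := by
    rw [Matrix.IsHermitian]
    ext i j
    rw [Matrix.conjTranspose_apply, star_trivial]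
    exact hentry i j
  set μ : Fin n → ℝ := hM.eigenvalues with hμ
  -- positivity of the scaled eigenvalues at t₀
  have hpos : ∀ i, 0 < w⁻¹ * (1 + t₀ * μ i) := by
    intro i
    set v : Fin n → ℝ := ⇑(hM.eigenvectorBasis i) with hv
    have hv0 : v ≠ 0 := by
      intro h
      exact hM.eigenvectorBasis.orthonormal.ne_zero i (by ext j; exact congrFun h j)
    have hMv : M.mulVec v = μ i • v := hM.mulVec_eigenvectorBasis i
    have hAv : (Amat (Matrix.of (phess u x₀)) p t₀).mulVec v = (w⁻¹ * (1 + t₀ * μ i)) • v := by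
      rw [hAmat, Matrix.smul_mulVec, Matrix.add_mulVec, Matrix.one_mulVec,
        Matrix.smul_mulVec, hMv]
      funext j
      simp only [Pi.smul_apply, Pi.add_apply, smul_eq_mul]
      ring
    have hq := hpd.dotProduct_mulVec_pos hv0
    rw [hAv] at hq
    have hsv : star v = v := by
      funext j; simp
    rw [hsv, dotProduct_smul] at hq
    have hvv : 0 ≤ dotProduct v v := Finset.sum_nonneg fun j _ => mul_self_nonneg _
    by_contra hc
    push_neg at hc
    have : (w⁻¹ * (1 + t₀ * μ i)) • dotProduct v v ≤ 0 := by
      rw [smul_eq_mul]; exact mul_nonpos_of_nonpos_of_nonneg hc hvv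
    linarith
  -- the function g and its derivative
  set q : Fin n → ℝ := fun i => w⁻¹ * (1 + t₀ * μ i) with hqdef
  set PS : Finset (Finset (Fin n)) := Finset.powersetCard k Finset.univ with hPS
  set G : ℝ := ∑ S ∈ PS, ∏ i ∈ S, q i with hGdef
  set G' : ℝ := ∑ S ∈ PS, ∑ i ∈ S, (∏ j ∈ S.erase i, q j) • (w⁻¹ * μ i) with hG'def
  have hsig : ∀ t : ℝ, sigmaElem k (Amat (Matrix.of (phess u x₀)) p t)
      = ∑ S ∈ PS, ∏ i ∈ S, (w⁻¹ * (1 + t * μ i)) := by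
    intro t
    rw [hAmat t, my_sigma_formula hkn hM]
  have hΦg : Φ = fun t => (∑ S ∈ PS, ∏ i ∈ S, (w⁻¹ * (1 + t * μ i))) ^ ((k:ℝ)⁻¹) := by
    rw [hΦ]
    funext t
    rw [hsig t]
  have hg : HasDerivAt (fun t => ∑ S ∈ PS, ∏ i ∈ S, (w⁻¹ * (1 + t * μ i))) G' t₀ := by
    apply HasDerivAt.fun_sum
    intro S _
    have hterm : ∀ i ∈ S, HasDerivAt (fun t : ℝ => w⁻¹ * (1 + t * μ i)) (w⁻¹ * μ i) t₀ := by
      intro i _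
      simpa using (((hasDerivAt_id t₀).mul_const (μ i)).const_add 1).const_mul w⁻¹
    exact HasDerivAt.fun_finset_prod hterm
  have hGq : G = ∑ S ∈ PS, ∏ i ∈ S, (w⁻¹ * (1 + t₀ * μ i)) := by rw [hGdef]
  have hGpos : 0 < G := by
    rw [hGdef]
    apply Finset.sum_pos
    · intro S _
      exact Finset.prod_pos fun i _ => hpos i
    · rw [hPS]
      rw [Finset.powersetCard_nonempty]
      simpa using hkn
  -- the key inequality
  have hkey : t₀ * G' < (k : ℝ) * G := by
    have hdiff : (k : ℝ) * G - t₀ * G'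
        = ∑ S ∈ PS, ∑ i ∈ S, w⁻¹ * ∏ j ∈ S.erase i, q j := by
      rw [hGdef, hG'def, Finset.mul_sum, Finset.mul_sum, ← Finset.sum_sub_distrib]
      apply Finset.sum_congr rfl
      intro S hS
      have hcard : S.card = k := (Finset.mem_powersetCard.mp hS).2
      have hk : (k : ℝ) * ∏ i ∈ S, q i = ∑ i ∈ S, q i * ∏ j ∈ S.erase i, q j := by
        rw [Finset.sum_congr rfl fun i hi => (Finset.mul_prod_erase S q hi)]
        rw [Finset.sum_const, hcard, nsmul_eq_mul]
      rw [hk, Finset.mul_sum, ← Finset.sum_sub_distrib]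
      apply Finset.sum_congr rfl
      intro i hi
      rw [smul_eq_mul, hqdef]
      ring
    have hdpos : 0 < ∑ S ∈ PS, ∑ i ∈ S, w⁻¹ * ∏ j ∈ S.erase i, q j := by
      apply Finset.sum_pos
      · intro S hS
        have hcard : S.card = k := (Finset.mem_powersetCard.mp hS).2
        apply Finset.sum_pos
        · intro i _
          exact mul_pos (inv_pos.2 hw0) (Finset.prod_pos fun j _ => hpos j)
        · exact Finset.card_pos.mp (by omega)
      · rw [hPS, Finset.powersetCard_nonempty]
        simpa using hkn
    linarith
  -- derivative of Φ
  have hΦd : HasDerivAt Φ (G' * ((k:ℝ)⁻¹) * G ^ ((k:ℝ)⁻¹ - 1)) t₀ := by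
    rw [hΦg]
    have hgr := hg.rpow_const (p := (k:ℝ)⁻¹) (Or.inl (by rw [← hGq]; exact hGpos.ne'))
    rw [← hGq] at hgr
    exact hgr
  have hderiv : deriv Φ t₀ = G' * ((k:ℝ)⁻¹) * G ^ ((k:ℝ)⁻¹ - 1) := hΦd.deriv
  have hΦt : Φ t₀ = G ^ ((k:ℝ)⁻¹) := by
    rw [hGq, hΦg]
  have hψt : ψ0 * t₀ = G ^ ((k:ℝ)⁻¹) := by
    rw [← heq, hΦt]
  have hkpos : (0:ℝ) < (k:ℝ) := by exact_mod_cast hk1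
  rw [hderiv]
  have hcpos : 0 < ((k:ℝ)⁻¹) * G ^ ((k:ℝ)⁻¹ - 1) :=
    mul_pos (inv_pos.2 hkpos) (Real.rpow_pos_of_pos hGpos _)
  have hmain : G' * ((k:ℝ)⁻¹) * G ^ ((k:ℝ)⁻¹ - 1) * t₀ < ψ0 * t₀ := by
    calc G' * ((k:ℝ)⁻¹) * G ^ ((k:ℝ)⁻¹ - 1) * t₀
        = (((k:ℝ)⁻¹) * G ^ ((k:ℝ)⁻¹ - 1)) * (t₀ * G') := by ring
      _ < (((k:ℝ)⁻¹) * G ^ ((k:ℝ)⁻¹ - 1)) * ((k:ℝ) * G) :=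
          mul_lt_mul_of_pos_left hkey hcpos
      _ = G ^ ((k:ℝ)⁻¹ - 1) * G ^ (1:ℝ) * ((k:ℝ)⁻¹ * (k:ℝ)) := by
          rw [Real.rpow_one]; ring
      _ = G ^ ((k:ℝ)⁻¹) := by
          rw [← Real.rpow_add hGpos, inv_mul_cancel₀ hkpos.ne', mul_one, sub_add_cancel]
      _ = ψ0 * t₀ := hψt.symm
  exact lt_of_mul_lt_mul_right hmain hupos.le
end
end
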